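/- arXiv:1605.02981 — 3 statements merged into one kernel-verified Lean document; each statement's English description precedes it below -/
import Mathlib

section
/- Let μ and μ' be probability distributions on {1,2,…} such that μ stochastically dominates μ', i.e. μ({k,k+1,…}) ≥ μ'({k,k+1,…}) for every k ≥ 1. Denote by 𝐑_μ(n) and 𝐑_{μ'}(n) the number of heaps needed to sort the first n items when the i.i.d. lives have law μ and μ' respectively (with the same i.i.d. uniform labels). Then E[𝐑_μ(n)] ≤ E[𝐑_{μ'}(n)] for every n ≥ 1. -/
open MeasureTheory ProbabilityTheory Filter Topology
open scoped ENNReal NNReal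

namespace HeapPatience

/-- Decrement by one the number of lives of the (first) alive particle with label `x`. -/
noncomputable def decrementAt : List (ℝ × ℕ) → ℝ → List (ℝ × ℕ)
  | [], _ => []
  | p :: rest, x =>
      if p.1 = x ∧ 0 < p.2 then (p.1, p.2 - 1) :: rest else p :: decrementAt rest x

/-- One step of the heap patience sorting algorithm, where `acc = (state, number of roots)`:
the new item is attached as a child of the alive particle (a particle with at least one
remaining life) having the largest label smaller than the label of the item, and that
particle loses one life; if there is no such particle, a new root (tree) is created. -/
noncomputable def step (acc : List (ℝ × ℕ) × ℕ) (item : ℝ × ℕ) : List (ℝ × ℕ) × ℕ :=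
  match (acc.1.filter fun p => decide (0 < p.2 ∧ p.1 < item.1)).argmax Prod.fst with
  | none => (item :: acc.1, acc.2 + 1)
  | some q => (item :: decrementAt acc.1 q.1, acc.2)

/-- Run the heap patience sorting algorithm on the items `(label, lives)` in order; returns
the final state (the particles with their remaining lives) and the number of roots created. -/
noncomputable def run (items : List (ℝ × ℕ)) : List (ℝ × ℕ) × ℕ :=
  items.foldl step ([], 0)

/-- `R items` : the number of heaps (trees) produced by the heap patience sorting
algorithm applied to the finite sequence `items` of pairs `(label, number of lives)`. -/
noncomputable def R (items : List (ℝ × ℕ)) : ℕ := (run items).2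

/-- `D items` : after running the algorithm, the number of dead particles whose label is
smaller than the label of every alive particle, i.e. the number of leading zeros of the
label-ordered vector of remaining lives. -/
noncomputable def D (items : List (ℝ × ℕ)) : ℕ :=
  ((run items).1.filter fun p =>
      decide (p.2 = 0 ∧ ∀ q ∈ (run items).1, 0 < q.2 → p.1 < q.1)).length

/-- `Rn U ν n ω` : the random number of heaps `𝐑(n)` needed to sort the first `n`
random items `(U i ω, ν i ω)`. -/
noncomputable def Rn {Ω : Type} (U : ℕ → Ω → ℝ) (ν : ℕ → Ω → ℕ) (n : ℕ) (ω : Ω) : ℕ :=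
  R ((List.range n).map fun i => (U i ω, ν i ω))

/-- `Dn U ν n ω` : the random variable `D_n`, the number of dead items whose label is
smaller than the label of every alive item after sorting the first `n` random items. -/
noncomputable def Dn {Ω : Type} (U : ℕ → Ω → ℝ) (ν : ℕ → Ω → ℕ) (n : ℕ) (ω : Ω) : ℕ :=
  D ((List.range n).map fun i => (U i ω, ν i ω))

/-- The uniform probability measure on the interval `(0,1)`. -/
noncomputable def unif01 : Measure ℝ := volume.restrict (Set.Ioo 0 1)


/-! ### basic step lemmas -/

lemma step_eq_none {s : List (ℝ × ℕ)} {r : ℕ} {it : ℝ × ℕ}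
    (h : (s.filter fun p => decide (0 < p.2 ∧ p.1 < it.1)).argmax Prod.fst = none) :
    step (s, r) it = (it :: s, r + 1) := by
  unfold step; rw [h]

lemma step_eq_some {s : List (ℝ × ℕ)} {r : ℕ} {it : ℝ × ℕ} {q : ℝ × ℕ}
    (h : (s.filter fun p => decide (0 < p.2 ∧ p.1 < it.1)).argmax Prod.fst = some q) :
    step (s, r) it = (it :: decrementAt s q.1, r) := by
  unfold step; rw [h]

lemma step_add (s : List (ℝ × ℕ)) (r : ℕ) (it : ℝ × ℕ) :
    step (s, r) it = ((step (s, 0) it).1, r + (step (s, 0) it).2) := by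
  cases h : (s.filter fun p => decide (0 < p.2 ∧ p.1 < it.1)).argmax Prod.fst with
  | none => rw [step_eq_none h, step_eq_none h]
  | some q => rw [step_eq_some h, step_eq_some h]; simp

lemma foldl_step_add (l : List (ℝ × ℕ)) : ∀ (s : List (ℝ × ℕ)) (r : ℕ),
    l.foldl step (s, r) = ((l.foldl step (s, 0)).1, r + (l.foldl step (s, 0)).2) := by
  induction l with
  | nil => intro s r; simp
  | cons it l ih =>
    intro s r
    rcases hs : step (s, 0) it with ⟨s', c⟩
    rw [List.foldl_cons, List.foldl_cons, step_add s r it, hs]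
    dsimp only
    rw [ih s' (r + c), ih s' c]
    simp [add_assoc]

lemma count_le_length (l : List (ℝ × ℕ)) : ∀ s r, (l.foldl step (s, r)).2 ≤ r + l.length := by
  induction l with
  | nil => simp
  | cons it l ih =>
    intro s r
    rw [List.foldl_cons]
    cases h : (s.filter fun p => decide (0 < p.2 ∧ p.1 < it.1)).argmax Prod.fst with
    | none =>
        rw [step_eq_none h]
        have := ih (it :: s) (r + 1)
        simp only [List.length_cons]
        omega
    | some q =>
        rw [step_eq_some h]
        have := ih (it :: decrementAt s q.1) r
        simp only [List.length_cons]
        omega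

lemma R_le_length (l : List (ℝ × ℕ)) : R l ≤ l.length := by
  have := count_le_length l ([] : List (ℝ × ℕ)) 0
  simpa [R, run] using this

/-! ### decrementAt lemmas -/

lemma decrementAt_cons (p : ℝ × ℕ) (rest : List (ℝ × ℕ)) (x : ℝ) :
    decrementAt (p :: rest) x =
      if p.1 = x ∧ 0 < p.2 then (p.1, p.2 - 1) :: rest else p :: decrementAt rest x := rfl

lemma decrementAt_append_pos {l₁ : List (ℝ × ℕ)} {y : ℝ}
    (h : ∃ p ∈ l₁, p.1 = y ∧ 0 < p.2) (l₂ : List (ℝ × ℕ)) :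
    decrementAt (l₁ ++ l₂) y = decrementAt l₁ y ++ l₂ := by
  induction l₁ with
  | nil => simp at h
  | cons p rest ih =>
    by_cases hp : p.1 = y ∧ 0 < p.2
    · simp [decrementAt_cons, hp]
    · rcases h with ⟨q, hq, hq2⟩
      rcases List.mem_cons.mp hq with rfl | hq
      · exact absurd hq2 hp
      · simp [decrementAt_cons, hp, ih ⟨q, hq, hq2⟩]

lemma decrementAt_append_neg {l₁ : List (ℝ × ℕ)} {y : ℝ}
    (h : ∀ p ∈ l₁, ¬(p.1 = y ∧ 0 < p.2)) (l₂ : List (ℝ × ℕ)) :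
    decrementAt (l₁ ++ l₂) y = l₁ ++ decrementAt l₂ y := by
  induction l₁ with
  | nil => simp
  | cons p rest ih =>
    have hp := h p (List.mem_cons_self)
    simp [decrementAt_cons, hp, ih (fun q hq => h q (List.mem_cons_of_mem p hq))]

lemma decrementAt_spec {s : List (ℝ × ℕ)} {y : ℝ}
    (h : ∃ p ∈ s, p.1 = y ∧ 0 < p.2) :
    ∃ a j b, s = a ++ (y, j + 1) :: b ∧ decrementAt s y = a ++ (y, j) :: b := by
  induction s with
  | nil => simp at h
  | cons p rest ih =>
    by_cases hp : p.1 = y ∧ 0 < p.2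
    · obtain ⟨hp1, hp2⟩ := hp
      obtain ⟨j, hj⟩ : ∃ j, p.2 = j + 1 := ⟨p.2 - 1, by omega⟩
      refine ⟨[], j, rest, ?_, ?_⟩
      · simp [← hp1, ← hj]
      · rw [decrementAt_cons]
        simp [hp1, hp2, hj]
    · rcases h with ⟨q, hq, hq2⟩
      rcases List.mem_cons.mp hq with rfl | hq
      · exact absurd hq2 hp
      · obtain ⟨a, j, b, h1, h2⟩ := ih ⟨q, hq, hq2⟩
        exact ⟨p :: a, j, b, by simp [h1], by simp [decrementAt_cons, hp, h2]⟩


/-! ### token relation -/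

def Rel (sA sB : List (ℝ × ℕ)) : Prop :=
  ∃ l₁ x k l₂, sA = l₁ ++ (x, k + 1) :: l₂ ∧ sB = l₁ ++ (x, k) :: l₂

lemma Rel.consRel {sA sB : List (ℝ × ℕ)} (h : Rel sA sB) (it : ℝ × ℕ) :
    Rel (it :: sA) (it :: sB) := by
  obtain ⟨l₁, x, k, l₂, rfl, rfl⟩ := h
  exact ⟨it :: l₁, x, k, l₂, rfl, rfl⟩

lemma argmax_label {l : List (ℝ × ℕ)} {q : ℝ × ℕ} (h : l.argmax Prod.fst = some q) :
    q ∈ l ∧ ∀ p ∈ l, p.1 ≤ q.1 :=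
  ⟨List.argmax_mem h, fun p hp => List.le_of_mem_argmax hp h⟩

lemma step_rel {sA sB : List (ℝ × ℕ)} (h : Rel sA sB) (it : ℝ × ℕ) :
    (Rel (step (sA, 0) it).1 (step (sB, 0) it).1 ∧ (step (sA, 0) it).2 = (step (sB, 0) it).2)
    ∨ ((step (sA, 0) it).1 = (step (sB, 0) it).1 ∧
        (step (sA, 0) it).2 ≤ (step (sB, 0) it).2) := by
  obtain ⟨l₁, x, k, l₂, rfl, rfl⟩ := h
  by_cases hxu : x < it.1
  · rcases Nat.eq_zero_or_pos k with hk | hk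
    · -- k = 0 : token alive in A only
      subst hk
      have hfA : (l₁ ++ (x, 0 + 1) :: l₂).filter (fun p => decide (0 < p.2 ∧ p.1 < it.1))
          = l₁.filter (fun p => decide (0 < p.2 ∧ p.1 < it.1)) ++ (x, 1) ::
            l₂.filter (fun p => decide (0 < p.2 ∧ p.1 < it.1)) := by
        simp [List.filter_append, List.filter_cons, hxu]
      have hfB : (l₁ ++ (x, 0) :: l₂).filter (fun p => decide (0 < p.2 ∧ p.1 < it.1))
          = l₁.filter (fun p => decide (0 < p.2 ∧ p.1 < it.1)) ++
            l₂.filter (fun p => decide (0 < p.2 ∧ p.1 < it.1)) := by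
        simp [List.filter_append, List.filter_cons, hxu]
      have hmemA : (x, 1) ∈ (l₁ ++ (x, 0 + 1) :: l₂).filter
          (fun p => decide (0 < p.2 ∧ p.1 < it.1)) := by
        rw [hfA]; exact List.mem_append_right _ (List.mem_cons_self)
      cases hA : ((l₁ ++ (x, 0 + 1) :: l₂).filter
          (fun p => decide (0 < p.2 ∧ p.1 < it.1))).argmax Prod.fst with
      | none =>
          rw [List.argmax_eq_none] at hA
          rw [hA] at hmemA; exact absurd hmemA (List.not_mem_nil)
      | some qA =>
          obtain ⟨hqAmem, hqAmax⟩ := argmax_label hA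
          have hxle : x ≤ qA.1 := hqAmax _ hmemA
          have hsubBA : ∀ p, p ∈ (l₁ ++ (x, 0) :: l₂).filter
              (fun p => decide (0 < p.2 ∧ p.1 < it.1)) →
              p ∈ (l₁ ++ (x, 0 + 1) :: l₂).filter
                (fun p => decide (0 < p.2 ∧ p.1 < it.1)) := by
            intro p hp
            rw [hfB] at hp; rw [hfA]
            rcases List.mem_append.mp hp with h1 | h2
            · exact List.mem_append_left _ h1
            · exact List.mem_append_right _ (List.mem_cons_of_mem _ h2)
          by_cases hyx : qA.1 = x
          · -- max label is x
            by_cases hl₁ : ∃ p ∈ l₁, p.1 = qA.1 ∧ 0 < p.2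
            · -- an alive x-cell exists in l₁ : both decrement inside l₁
              obtain ⟨p, hp, hp1, hp2⟩ := hl₁
              have hpf : p ∈ (l₁ ++ (x, 0) :: l₂).filter
                  (fun p => decide (0 < p.2 ∧ p.1 < it.1)) := by
                rw [hfB]
                refine List.mem_append_left _ (List.mem_filter.mpr ⟨hp, ?_⟩)
                simp only [decide_eq_true_eq]
                exact ⟨hp2, by rw [hp1, hyx]; exact hxu⟩
              cases hB : ((l₁ ++ (x, 0) :: l₂).filter
                  (fun p => decide (0 < p.2 ∧ p.1 < it.1))).argmax Prod.fst with
              | none =>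
                  rw [List.argmax_eq_none] at hB
                  rw [hB] at hpf; exact absurd hpf (List.not_mem_nil)
              | some qB =>
                  obtain ⟨hqBmem, hqBmax⟩ := argmax_label hB
                  have hyy : qB.1 = qA.1 := by
                    have h1 : qA.1 ≤ qB.1 := by
                      have := hqBmax p hpf; rw [hp1] at this; exact this
                    have h2 : qB.1 ≤ qA.1 := hqAmax _ (hsubBA _ hqBmem)
                    exact le_antisymm h2 h1
                  rw [step_eq_some hA, step_eq_some hB, hyy]
                  have hl₁' : ∃ p ∈ l₁, p.1 = qA.1 ∧ 0 < p.2 := ⟨p, hp, hp1, hp2⟩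
                  rw [decrementAt_append_pos hl₁', decrementAt_append_pos hl₁']
                  exact Or.inl ⟨⟨it :: decrementAt l₁ qA.1, x, 0, l₂, rfl, rfl⟩, rfl⟩
            · -- A decrements the token and becomes equal to sB
              have hneg : ∀ p ∈ l₁, ¬(p.1 = qA.1 ∧ 0 < p.2) := by
                intro p hp hc; exact hl₁ ⟨p, hp, hc⟩
              have hdecA : decrementAt (l₁ ++ (x, 0 + 1) :: l₂) qA.1
                  = l₁ ++ (x, 0) :: l₂ := by
                rw [decrementAt_append_neg hneg, decrementAt_cons]
                simp [hyx.symm]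
              rw [step_eq_some hA]
              cases hB : ((l₁ ++ (x, 0) :: l₂).filter
                  (fun p => decide (0 < p.2 ∧ p.1 < it.1))).argmax Prod.fst with
              | none =>
                  rw [step_eq_none hB]
                  exact Or.inr ⟨by rw [hdecA], by norm_num⟩
              | some qB =>
                  rw [step_eq_some hB]
                  obtain ⟨hqBmem, _⟩ := argmax_label hB
                  have hqB' : qB ∈ (l₁ ++ (x, 0) :: l₂) ∧ qB.1 = qB.1 ∧ 0 < qB.2 := by
                    have := List.mem_filter.mp hqBmem
                    refine ⟨this.1, rfl, ?_⟩
                    have := this.2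
                    simp only [decide_eq_true_eq] at this
                    exact this.1
                  obtain ⟨a, j, b, hsB, hdec⟩ :=
                    decrementAt_spec ⟨qB, hqB'.1, hqB'.2⟩
                  refine Or.inl ⟨?_, rfl⟩
                  rw [hdecA, hdec, hsB]
                  exact ⟨it :: a, qB.1, j, b, rfl, rfl⟩
          · -- max label y ≠ x : both decrement the same non-token label
            have hqAmem' : qA ∈ (l₁ ++ (x, 0) :: l₂).filter
                (fun p => decide (0 < p.2 ∧ p.1 < it.1)) := by
              rw [hfA] at hqAmem; rw [hfB]
              rcases List.mem_append.mp hqAmem with h1 | h2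
              · exact List.mem_append_left _ h1
              · rcases List.mem_cons.mp h2 with h3 | h4
                · exact absurd (by rw [h3]) hyx
                · exact List.mem_append_right _ h4
            cases hB : ((l₁ ++ (x, 0) :: l₂).filter
                (fun p => decide (0 < p.2 ∧ p.1 < it.1))).argmax Prod.fst with
            | none =>
                rw [List.argmax_eq_none] at hB
                rw [hB] at hqAmem'; exact absurd hqAmem' (List.not_mem_nil)
            | some qB =>
                obtain ⟨hqBmem, hqBmax⟩ := argmax_label hB
                have hyy : qB.1 = qA.1 :=
                  le_antisymm (hqAmax _ (hsubBA _ hqBmem)) (hqBmax _ hqAmem')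
                rw [step_eq_some hA, step_eq_some hB, hyy]
                by_cases hl₁ : ∃ p ∈ l₁, p.1 = qA.1 ∧ 0 < p.2
                · rw [decrementAt_append_pos hl₁, decrementAt_append_pos hl₁]
                  exact Or.inl ⟨⟨it :: decrementAt l₁ qA.1, x, 0, l₂, rfl, rfl⟩, rfl⟩
                · have hneg : ∀ p ∈ l₁, ¬(p.1 = qA.1 ∧ 0 < p.2) := by
                    intro p hp hc; exact hl₁ ⟨p, hp, hc⟩
                  rw [decrementAt_append_neg hneg, decrementAt_append_neg hneg,
                    decrementAt_cons, decrementAt_cons]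
                  have hne : ¬(((x, (1:ℕ)) : ℝ × ℕ).1 = qA.1 ∧ 0 < ((x, (1:ℕ)) : ℝ × ℕ).2) := by
                    intro hc; exact hyx hc.1.symm
                  have hne0 : ¬(((x, (0:ℕ)) : ℝ × ℕ).1 = qA.1 ∧ 0 < ((x, (0:ℕ)) : ℝ × ℕ).2) := by
                    intro hc; exact absurd hc.2 (by norm_num)
                  rw [if_neg hne, if_neg hne0]
                  exact Or.inl ⟨⟨it :: l₁, x, 0, decrementAt l₂ qA.1, rfl, rfl⟩, rfl⟩
    · -- k ≥ 1 : token alive in both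
      have hfA : (l₁ ++ (x, k + 1) :: l₂).filter (fun p => decide (0 < p.2 ∧ p.1 < it.1))
          = l₁.filter (fun p => decide (0 < p.2 ∧ p.1 < it.1)) ++ (x, k + 1) ::
            l₂.filter (fun p => decide (0 < p.2 ∧ p.1 < it.1)) := by
        simp [List.filter_append, List.filter_cons, hxu]
      have hfB : (l₁ ++ (x, k) :: l₂).filter (fun p => decide (0 < p.2 ∧ p.1 < it.1))
          = l₁.filter (fun p => decide (0 < p.2 ∧ p.1 < it.1)) ++ (x, k) ::
            l₂.filter (fun p => decide (0 < p.2 ∧ p.1 < it.1)) := by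
        simp [List.filter_append, List.filter_cons, hxu, hk]
      have hmemA : (x, k + 1) ∈ (l₁ ++ (x, k + 1) :: l₂).filter
          (fun p => decide (0 < p.2 ∧ p.1 < it.1)) := by
        rw [hfA]; exact List.mem_append_right _ (List.mem_cons_self)
      have hmemB : (x, k) ∈ (l₁ ++ (x, k) :: l₂).filter
          (fun p => decide (0 < p.2 ∧ p.1 < it.1)) := by
        rw [hfB]; exact List.mem_append_right _ (List.mem_cons_self)
      cases hA : ((l₁ ++ (x, k + 1) :: l₂).filter
          (fun p => decide (0 < p.2 ∧ p.1 < it.1))).argmax Prod.fst with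
      | none =>
          rw [List.argmax_eq_none] at hA
          rw [hA] at hmemA; exact absurd hmemA (List.not_mem_nil)
      | some qA =>
      cases hB : ((l₁ ++ (x, k) :: l₂).filter
          (fun p => decide (0 < p.2 ∧ p.1 < it.1))).argmax Prod.fst with
      | none =>
          rw [List.argmax_eq_none] at hB
          rw [hB] at hmemB; exact absurd hmemB (List.not_mem_nil)
      | some qB =>
          obtain ⟨hqAmem, hqAmax⟩ := argmax_label hA
          obtain ⟨hqBmem, hqBmax⟩ := argmax_label hB
          -- the two filtered lists have the same labels
          have hmap : ((l₁ ++ (x, k + 1) :: l₂).filter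
                (fun p => decide (0 < p.2 ∧ p.1 < it.1))).map Prod.fst
              = ((l₁ ++ (x, k) :: l₂).filter
                (fun p => decide (0 < p.2 ∧ p.1 < it.1))).map Prod.fst := by
            rw [hfA, hfB]; simp
          have h1 : qA.1 ∈ ((l₁ ++ (x, k) :: l₂).filter
              (fun p => decide (0 < p.2 ∧ p.1 < it.1))).map Prod.fst := by
            rw [← hmap]; exact List.mem_map_of_mem hqAmem
          have h2 : qB.1 ∈ ((l₁ ++ (x, k + 1) :: l₂).filter
              (fun p => decide (0 < p.2 ∧ p.1 < it.1))).map Prod.fst := by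
            rw [hmap]; exact List.mem_map_of_mem hqBmem
          obtain ⟨pB, hpB, hpBeq⟩ := List.mem_map.mp h1
          obtain ⟨pA, hpA, hpAeq⟩ := List.mem_map.mp h2
          have hyy : qB.1 = qA.1 := by
            have e1 : qA.1 ≤ qB.1 := hpBeq ▸ hqBmax pB hpB
            have e2 : qB.1 ≤ qA.1 := hpAeq ▸ hqAmax pA hpA
            exact le_antisymm e2 e1
          rw [step_eq_some hA, step_eq_some hB, hyy]
          by_cases hl₁ : ∃ p ∈ l₁, p.1 = qA.1 ∧ 0 < p.2
          · rw [decrementAt_append_pos hl₁, decrementAt_append_pos hl₁]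
            exact Or.inl ⟨⟨it :: decrementAt l₁ qA.1, x, k, l₂, rfl, rfl⟩, rfl⟩
          · have hneg : ∀ p ∈ l₁, ¬(p.1 = qA.1 ∧ 0 < p.2) := by
              intro p hp hc; exact hl₁ ⟨p, hp, hc⟩
            rw [decrementAt_append_neg hneg, decrementAt_append_neg hneg,
              decrementAt_cons, decrementAt_cons]
            by_cases hxy : (x : ℝ) = qA.1
            · have c1 : ((x, k+1).1 = qA.1 ∧ 0 < (x, k+1).2) := ⟨hxy, by omega⟩
              have c2 : ((x, k).1 = qA.1 ∧ 0 < (x, k).2) := ⟨hxy, hk⟩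
              rw [if_pos c1, if_pos c2]
              have e1 : ((x, k + 1) : ℝ × ℕ).2 - 1 = (k - 1) + 1 := by omega
              have e2 : ((x, k) : ℝ × ℕ).2 - 1 = k - 1 := by omega
              refine Or.inl ⟨⟨it :: l₁, ((x, k+1) : ℝ × ℕ).1, k - 1, l₂, ?_, ?_⟩, rfl⟩
              · rw [e1]; rfl
              · rw [e2]; rfl
            · have c1 : ¬((x, k+1).1 = qA.1 ∧ 0 < (x, k+1).2) := fun hc => hxy hc.1
              have c2 : ¬((x, k).1 = qA.1 ∧ 0 < (x, k).2) := fun hc => hxy hc.1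
              rw [if_neg c1, if_neg c2]
              exact Or.inl ⟨⟨it :: l₁, x, k, decrementAt l₂ qA.1, rfl, rfl⟩, rfl⟩
  · -- ¬ x < it.1 : the token cell is filtered out in both runs
    have hPf : ∀ k' : ℕ, (decide (0 < ((x, k') : ℝ × ℕ).2 ∧ ((x, k') : ℝ × ℕ).1 < it.1)) = false := by
      intro k'; simp [hxu]
    have hfeq : (l₁ ++ (x, k + 1) :: l₂).filter (fun p => decide (0 < p.2 ∧ p.1 < it.1))
        = (l₁ ++ (x, k) :: l₂).filter (fun p => decide (0 < p.2 ∧ p.1 < it.1)) := by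
      simp [List.filter_append, List.filter_cons, hxu]
    cases hA : ((l₁ ++ (x, k + 1) :: l₂).filter
        (fun p => decide (0 < p.2 ∧ p.1 < it.1))).argmax Prod.fst with
    | none =>
        have hB : ((l₁ ++ (x, k) :: l₂).filter
            (fun p => decide (0 < p.2 ∧ p.1 < it.1))).argmax Prod.fst = none := by
          rw [← hfeq]; exact hA
        rw [step_eq_none hA, step_eq_none hB]
        exact Or.inl ⟨Rel.consRel ⟨l₁, x, k, l₂, rfl, rfl⟩ it, rfl⟩
    | some qA =>
        have hB : ((l₁ ++ (x, k) :: l₂).filter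
            (fun p => decide (0 < p.2 ∧ p.1 < it.1))).argmax Prod.fst = some qA := by
          rw [← hfeq]; exact hA
        rw [step_eq_some hA, step_eq_some hB]
        obtain ⟨hqAmem, _⟩ := argmax_label hA
        have hqlt : qA.1 < it.1 := by
          have := (List.mem_filter.mp hqAmem).2
          simp only [decide_eq_true_eq] at this
          exact this.2
        have hqx : (x : ℝ) ≠ qA.1 := by
          intro hc; rw [← hc] at hqlt; exact hxu hqlt
        by_cases hl₁ : ∃ p ∈ l₁, p.1 = qA.1 ∧ 0 < p.2
        · rw [decrementAt_append_pos hl₁, decrementAt_append_pos hl₁]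
          exact Or.inl ⟨⟨it :: decrementAt l₁ qA.1, x, k, l₂, rfl, rfl⟩, rfl⟩
        · have hneg : ∀ p ∈ l₁, ¬(p.1 = qA.1 ∧ 0 < p.2) := by
            intro p hp hc; exact hl₁ ⟨p, hp, hc⟩
          rw [decrementAt_append_neg hneg, decrementAt_append_neg hneg,
            decrementAt_cons, decrementAt_cons]
          have c1 : ¬((x, k+1).1 = qA.1 ∧ 0 < (x, k+1).2) := fun hc => hqx hc.1
          have c2 : ¬((x, k).1 = qA.1 ∧ 0 < (x, k).2) := fun hc => hqx hc.1
          rw [if_neg c1, if_neg c2]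
          exact Or.inl ⟨⟨it :: l₁, x, k, decrementAt l₂ qA.1, rfl, rfl⟩, rfl⟩

/-! ### monotonicity of R in the lives -/

lemma count_le_of_rel : ∀ (l : List (ℝ × ℕ)) {sA sB : List (ℝ × ℕ)}, Rel sA sB →
    (l.foldl step (sA, 0)).2 ≤ (l.foldl step (sB, 0)).2 := by
  intro l
  induction l with
  | nil => intro sA sB _; exact le_rfl
  | cons it l ih =>
    intro sA sB h
    rw [List.foldl_cons, List.foldl_cons]
    have hstep := step_rel h it
    rcases hsA : step (sA, 0) it with ⟨s', c⟩
    rcases hsB : step (sB, 0) it with ⟨t', d⟩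
    rw [hsA, hsB] at hstep
    simp only at hstep
    rw [foldl_step_add l s' c, foldl_step_add l t' d]
    simp only
    rcases hstep with ⟨hrel, hcnt⟩ | ⟨heq, hle⟩
    · exact add_le_add hcnt.le (ih hrel)
    · subst heq
      exact add_le_add hle le_rfl

lemma step_item_lives (s : List (ℝ × ℕ)) (r : ℕ) (x : ℝ) (kA kB : ℕ) :
    ∃ s' r', step (s, r) (x, kA) = ((x, kA) :: s', r') ∧
      step (s, r) (x, kB) = ((x, kB) :: s', r') := by
  cases hm : (s.filter fun p => decide (0 < p.2 ∧ p.1 < x)).argmax Prod.fst with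
  | none =>
      refine ⟨s, r + 1, ?_, ?_⟩ <;>
      · apply step_eq_none
        exact hm
  | some q =>
      refine ⟨decrementAt s q.1, r, ?_, ?_⟩ <;>
      · apply step_eq_some
        exact hm

lemma R_succ_le (a : List (ℝ × ℕ)) (x : ℝ) (k : ℕ) (b : List (ℝ × ℕ)) :
    R (a ++ (x, k + 1) :: b) ≤ R (a ++ (x, k) :: b) := by
  unfold R run
  rw [List.foldl_append, List.foldl_append]
  rcases hs : a.foldl step ([], 0) with ⟨s, r⟩
  rw [List.foldl_cons, List.foldl_cons]
  obtain ⟨s', r', h1, h2⟩ := step_item_lives s r x (k + 1) k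
  rw [h1, h2, foldl_step_add b _ r', foldl_step_add b _ r']
  simp only
  exact add_le_add le_rfl (count_le_of_rel b ⟨[], x, k, s', rfl, rfl⟩)

lemma R_lives_le (a : List (ℝ × ℕ)) (x : ℝ) {k k' : ℕ} (h : k' ≤ k) (b : List (ℝ × ℕ)) :
    R (a ++ (x, k) :: b) ≤ R (a ++ (x, k') :: b) := by
  induction k, h using Nat.le_induction with
  | base => exact le_rfl
  | succ n hn ih => exact (R_succ_le a x n b).trans ih

lemma R_mono_append {l l' : List (ℝ × ℕ)}
    (h : List.Forall₂ (fun p q : ℝ × ℕ => p.1 = q.1 ∧ q.2 ≤ p.2) l l') :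
    ∀ a : List (ℝ × ℕ), R (a ++ l) ≤ R (a ++ l') := by
  induction h with
  | nil => intro a; exact le_rfl
  | @cons p q l₁ l₂ hpq h ih =>
    intro a
    rcases p with ⟨px, pk⟩
    rcases q with ⟨qx, qk⟩
    obtain ⟨hx, hk⟩ := hpq
    simp only at hx hk
    subst hx
    calc R (a ++ (px, pk) :: l₁) ≤ R (a ++ (px, qk) :: l₁) := R_lives_le a px hk l₁
      _ = R ((a ++ [(px, qk)]) ++ l₁) := by rw [List.append_assoc]; rfl
      _ ≤ R ((a ++ [(px, qk)]) ++ l₂) := ih (a ++ [(px, qk)])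
      _ = R (a ++ (px, qk) :: l₂) := by rw [List.append_assoc]; rfl

lemma R_mono {l l' : List (ℝ × ℕ)}
    (h : List.Forall₂ (fun p q : ℝ × ℕ => p.1 = q.1 ∧ q.2 ≤ p.2) l l') :
    R l ≤ R l' := by
  simpa using R_mono_append h ([] : List (ℝ × ℕ))

/-! ### order-pattern invariance -/

lemma eq_iff_of_lt_iff {n : ℕ} {x y : Fin n → ℝ} (hxy : ∀ i j, x i < x j ↔ y i < y j) :
    ∀ i j, x i = x j ↔ y i = y j := by
  intro i j
  constructor
  · intro h
    have h1 : ¬ y i < y j := by rw [← hxy]; rw [h]; exact lt_irrefl _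
    have h2 : ¬ y j < y i := by rw [← hxy]; rw [h]; exact lt_irrefl _
    exact le_antisymm (not_lt.mp h2) (not_lt.mp h1)
  · intro h
    have h1 : ¬ x i < x j := by rw [hxy]; rw [h]; exact lt_irrefl _
    have h2 : ¬ x j < x i := by rw [hxy]; rw [h]; exact lt_irrefl _
    exact le_antisymm (not_lt.mp h2) (not_lt.mp h1)

lemma map_lives_update {n : ℕ} (x : Fin n → ℝ) (lv : Fin n → ℕ) {K : List (Fin n)} {j : Fin n}
    (hj : j ∉ K) (v : ℕ) :
    K.map (fun i => (x i, Function.update lv j v i)) = K.map (fun i => (x i, lv i)) :=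
  List.map_congr_left fun i hi => by
    have hne : i ≠ j := fun h => hj (h ▸ hi)
    rw [Function.update_of_ne hne]

lemma simdec {n : ℕ} (x y : Fin n → ℝ) :
    ∀ (K : List (Fin n)), K.Nodup → ∀ (lv : Fin n → ℕ) (t₁ t₂ : ℝ),
    (∀ j ∈ K, (x j = t₁ ∧ 0 < lv j) ↔ (y j = t₂ ∧ 0 < lv j)) →
    (∃ j ∈ K, x j = t₁ ∧ 0 < lv j) →
    ∃ j₀ ∈ K,
      decrementAt (K.map fun i => (x i, lv i)) t₁
        = K.map (fun i => (x i, Function.update lv j₀ (lv j₀ - 1) i)) ∧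
      decrementAt (K.map fun i => (y i, lv i)) t₂
        = K.map (fun i => (y i, Function.update lv j₀ (lv j₀ - 1) i)) := by
  intro K
  induction K with
  | nil => intro _ lv t₁ t₂ _ hex; simp at hex
  | cons j K ih =>
    intro hnd lv t₁ t₂ hiff hex
    have hjK : j ∉ K := (List.nodup_cons.mp hnd).1
    by_cases hj : x j = t₁ ∧ 0 < lv j
    · have hj' : y j = t₂ ∧ 0 < lv j := (hiff j (List.mem_cons_self)).mp hj
      refine ⟨j, List.mem_cons_self, ?_, ?_⟩
      · rw [List.map_cons, decrementAt_cons, if_pos (show ((x j, lv j) : ℝ × ℕ).1 = t₁ ∧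
          0 < ((x j, lv j) : ℝ × ℕ).2 from hj)]
        rw [List.map_cons, map_lives_update x lv hjK, Function.update_self]
      · rw [List.map_cons, decrementAt_cons, if_pos (show ((y j, lv j) : ℝ × ℕ).1 = t₂ ∧
          0 < ((y j, lv j) : ℝ × ℕ).2 from hj')]
        rw [List.map_cons, map_lives_update y lv hjK, Function.update_self]
    · have hj' : ¬(y j = t₂ ∧ 0 < lv j) := fun hc => hj ((hiff j (List.mem_cons_self)).mpr hc)
      obtain ⟨w, hw, hwp⟩ := hex
      have hw' : w ∈ K := by
        rcases List.mem_cons.mp hw with rfl | h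
        · exact absurd hwp hj
        · exact h
      obtain ⟨j₀, hj₀K, hd1, hd2⟩ := ih (List.nodup_cons.mp hnd).2 lv t₁ t₂
        (fun i hi => hiff i (List.mem_cons_of_mem _ hi)) ⟨w, hw', hwp⟩
      have hjj₀ : j ≠ j₀ := fun h => hjK (by rw [h]; exact hj₀K)
      refine ⟨j₀, List.mem_cons_of_mem _ hj₀K, ?_, ?_⟩
      · rw [List.map_cons, decrementAt_cons, if_neg (show ¬(((x j, lv j) : ℝ × ℕ).1 = t₁ ∧
          0 < ((x j, lv j) : ℝ × ℕ).2) from hj), hd1, List.map_cons,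
          Function.update_of_ne hjj₀]
      · rw [List.map_cons, decrementAt_cons, if_neg (show ¬(((y j, lv j) : ℝ × ℕ).1 = t₂ ∧
          0 < ((y j, lv j) : ℝ × ℕ).2) from hj'), hd2, List.map_cons,
          Function.update_of_ne hjj₀]

lemma step_bridge {n : ℕ} (x y : Fin n → ℝ) (hxy : ∀ i j, x i < x j ↔ y i < y j)
    {K : List (Fin n)} (hnd : K.Nodup) (lv : Fin n → ℕ) (i₀ : Fin n) (m₀ c : ℕ) :
    ∃ (lv' : Fin n → ℕ) (c' : ℕ),
      step (K.map fun i => (x i, lv i), c) (x i₀, m₀)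
        = ((x i₀, m₀) :: (K.map fun i => (x i, lv' i)), c') ∧
      step (K.map fun i => (y i, lv i), c) (y i₀, m₀)
        = ((y i₀, m₀) :: (K.map fun i => (y i, lv' i)), c') := by
  have heq := eq_iff_of_lt_iff hxy
  have hfx : ((K.map fun i => (x i, lv i)).filter fun p => decide (0 < p.2 ∧ p.1 < x i₀))
      = (K.filter fun j => decide (0 < lv j ∧ x j < x i₀)).map (fun i => (x i, lv i)) := by
    rw [List.filter_map]
    congr 1
  have hfy : ((K.map fun i => (y i, lv i)).filter fun p => decide (0 < p.2 ∧ p.1 < y i₀))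
      = (K.filter fun j => decide (0 < lv j ∧ x j < x i₀)).map (fun i => (y i, lv i)) := by
    rw [List.filter_map]
    congr 1
    apply List.filter_congr
    intro j _
    simp only [Function.comp]
    exact decide_eq_decide.mpr (by rw [hxy j i₀])
  rcases hKf : K.filter (fun j => decide (0 < lv j ∧ x j < x i₀)) with _ | ⟨j₁', Kf'⟩
  · -- empty filter : both create a root
    have hax : ((K.map fun i => (x i, lv i)).filter fun p =>
        decide (0 < p.2 ∧ p.1 < x i₀)).argmax Prod.fst = none := by
      rw [hfx, hKf]; rfl
    have hay : ((K.map fun i => (y i, lv i)).filter fun p =>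
        decide (0 < p.2 ∧ p.1 < y i₀)).argmax Prod.fst = none := by
      rw [hfy, hKf]; rfl
    refine ⟨lv, c + 1, ?_, ?_⟩
    · apply step_eq_none; exact hax
    · apply step_eq_none; exact hay
  · -- nonempty filter
    set Kf := K.filter (fun j => decide (0 < lv j ∧ x j < x i₀)) with hKfdef
    have hKfne : Kf ≠ [] := by rw [hKf]; exact List.cons_ne_nil _ _
    have hKfsub : ∀ j ∈ Kf, j ∈ K ∧ 0 < lv j ∧ x j < x i₀ := by
      intro j hj
      have := List.mem_filter.mp hj
      refine ⟨this.1, by simpa using this.2⟩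
    cases hA : ((K.map fun i => (x i, lv i)).filter fun p =>
        decide (0 < p.2 ∧ p.1 < x i₀)).argmax Prod.fst with
    | none =>
        rw [List.argmax_eq_none, hfx, List.map_eq_nil_iff] at hA
        exact absurd hA hKfne
    | some qA =>
    cases hB : ((K.map fun i => (y i, lv i)).filter fun p =>
        decide (0 < p.2 ∧ p.1 < y i₀)).argmax Prod.fst with
    | none =>
        rw [List.argmax_eq_none, hfy, List.map_eq_nil_iff] at hB
        exact absurd hB hKfne
    | some qB =>
        obtain ⟨hqAmem, hqAmax⟩ := argmax_label hA
        obtain ⟨hqBmem, hqBmax⟩ := argmax_label hB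
        rw [hfx] at hqAmem hqAmax
        rw [hfy] at hqBmem hqBmax
        obtain ⟨j₁, hj₁Kf, hj₁eq⟩ := List.mem_map.mp hqAmem
        obtain ⟨j₂, hj₂Kf, hj₂eq⟩ := List.mem_map.mp hqBmem
        have hmaxx : ∀ j ∈ Kf, x j ≤ x j₁ := by
          intro j hj
          have := hqAmax _ (List.mem_map_of_mem (f := fun i => (x i, lv i)) hj)
          rw [← hj₁eq] at this
          exact this
        have hmaxy : ∀ j ∈ Kf, y j ≤ y j₂ := by
          intro j hj
          have := hqBmax _ (List.mem_map_of_mem (f := fun i => (y i, lv i)) hj)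
          rw [← hj₂eq] at this
          exact this
        have hy21 : y j₂ = y j₁ := by
          refine le_antisymm ?_ (hmaxy _ hj₁Kf)
          have hx21 : x j₂ ≤ x j₁ := hmaxx _ hj₂Kf
          exact not_lt.mp (fun hc => (not_lt.mpr hx21) ((hxy j₁ j₂).mpr hc))
        have hiff : ∀ j ∈ K, (x j = x j₁ ∧ 0 < lv j) ↔ (y j = y j₂ ∧ 0 < lv j) := by
          intro j _
          rw [hy21]
          constructor
          · rintro ⟨h1, h2⟩; exact ⟨(heq j j₁).mp h1, h2⟩
          · rintro ⟨h1, h2⟩; exact ⟨(heq j j₁).mpr h1, h2⟩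
        have hex : ∃ j ∈ K, x j = x j₁ ∧ 0 < lv j :=
          ⟨j₁, (hKfsub _ hj₁Kf).1, rfl, (hKfsub _ hj₁Kf).2.1⟩
        obtain ⟨j₀, hj₀K, hd1, hd2⟩ := simdec x y K hnd lv (x j₁) (y j₂) hiff hex
        refine ⟨Function.update lv j₀ (lv j₀ - 1), c, ?_, ?_⟩
        · have hs := step_eq_some (s := K.map fun i => (x i, lv i)) (r := c)
            (it := ((x i₀, m₀) : ℝ × ℕ)) (q := qA) (by exact hA)
          rw [hs, ← hj₁eq] at *
          rw [hd1]
        · have hs := step_eq_some (s := K.map fun i => (y i, lv i)) (r := c)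
            (it := ((y i₀, m₀) : ℝ × ℕ)) (q := qB) (by exact hB)
          rw [hs, ← hj₂eq] at *
          rw [hd2]

lemma run_bridge {n : ℕ} (x y : Fin n → ℝ) (m : Fin n → ℕ)
    (hxy : ∀ i j, x i < x j ↔ y i < y j) :
    ∀ (J K : List (Fin n)), (J ++ K).Nodup → ∀ (lv : Fin n → ℕ) (c : ℕ),
    ((J.map fun i => (x i, m i)).foldl step ((K.map fun i => (x i, lv i)), c)).2
      = ((J.map fun i => (y i, m i)).foldl step ((K.map fun i => (y i, lv i)), c)).2 := by
  intro J
  induction J with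
  | nil => intro K _ lv c; rfl
  | cons i₀ J ih =>
    intro K hnd lv c
    have hnd' : (i₀ :: (J ++ K)).Nodup := by simpa using hnd
    have hi₀ : i₀ ∉ K := fun h => (List.nodup_cons.mp hnd').1 (List.mem_append_right _ h)
    have hKnd : K.Nodup := List.Nodup.sublist (List.sublist_append_right J K)
      (List.nodup_cons.mp hnd').2
    obtain ⟨lv', c', hx, hy⟩ := step_bridge x y hxy hKnd lv i₀ (m i₀) c
    rw [List.map_cons, List.foldl_cons, List.map_cons, List.foldl_cons, hx, hy]
    have hx2 : (x i₀, m i₀) :: (K.map fun i => (x i, lv' i))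
        = (i₀ :: K).map (fun i => (x i, Function.update lv' i₀ (m i₀) i)) := by
      rw [List.map_cons, Function.update_self, map_lives_update x lv' hi₀]
    have hy2 : (y i₀, m i₀) :: (K.map fun i => (y i, lv' i))
        = (i₀ :: K).map (fun i => (y i, Function.update lv' i₀ (m i₀) i)) := by
      rw [List.map_cons, Function.update_self, map_lives_update y lv' hi₀]
    rw [hx2, hy2]
    have hndJ : (J ++ (i₀ :: K)).Nodup := (List.perm_middle.nodup_iff).mpr hnd'
    exact ih (i₀ :: K) hndJ _ c'

lemma R_pattern {n : ℕ} (x y : Fin n → ℝ) (m : Fin n → ℕ)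
    (hxy : ∀ i j, x i < x j ↔ y i < y j) :
    R ((List.finRange n).map fun i => (x i, m i))
      = R ((List.finRange n).map fun i => (y i, m i)) := by
  have := run_bridge x y m hxy (List.finRange n) ([] : List (Fin n)) (by simpa using List.nodup_finRange n)
    (fun _ => 0) 0
  simpa [R, run] using this

/-! ### measurability -/

noncomputable def gfun (n : ℕ) : (Fin n → ℝ × ℕ) → ℕ :=
  fun v => R ((List.finRange n).map fun i => v i)

lemma gfun_congr {n : ℕ} {v w : Fin n → ℝ × ℕ}
    (h1 : ∀ i j, (v i).1 < (v j).1 ↔ (w i).1 < (w j).1)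
    (h2 : ∀ i, (v i).2 = (w i).2) : gfun n v = gfun n w := by
  unfold gfun
  have e1 : ((List.finRange n).map fun i => v i)
      = (List.finRange n).map fun i => ((v i).1, (w i).2) :=
    List.map_congr_left fun i _ => by rw [← h2 i]
  have e2 : ((List.finRange n).map fun i => w i)
      = (List.finRange n).map fun i => ((w i).1, (w i).2) :=
    List.map_congr_left fun i _ => rfl
  rw [e1, e2]
  exact R_pattern (fun i => (v i).1) (fun i => (w i).1) (fun i => (w i).2) h1

lemma gfun_le (n : ℕ) (v : Fin n → ℝ × ℕ) : gfun n v ≤ n := by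
  have := R_le_length ((List.finRange n).map fun i => v i)
  simpa [gfun, List.length_finRange] using this

lemma measurable_fst_apply {n : ℕ} (i : Fin n) :
    Measurable (fun v : Fin n → ℝ × ℕ => (v i).1) :=
  measurable_fst.comp (measurable_pi_apply i)

lemma measurable_snd_apply {n : ℕ} (i : Fin n) :
    Measurable (fun v : Fin n → ℝ × ℕ => (v i).2) :=
  measurable_snd.comp (measurable_pi_apply i)

lemma measurable_gfun (n : ℕ) : Measurable (gfun n) := by
  apply measurable_to_countable'
  intro c
  have hrw : gfun n ⁻¹' {c} = ⋃ (σ : Fin n → Fin n → Bool) (m : Fin n → ℕ),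
      {v : Fin n → ℝ × ℕ | (∀ i j, ((v i).1 < (v j).1 ↔ σ i j = true))
        ∧ (∀ i, (v i).2 = m i) ∧ gfun n v = c} := by
    ext v
    simp only [Set.mem_preimage, Set.mem_singleton_iff, Set.mem_iUnion, Set.mem_setOf_eq]
    constructor
    · intro h
      exact ⟨fun i j => decide ((v i).1 < (v j).1), fun i => (v i).2,
        fun i j => by simp, fun i => rfl, h⟩
    · rintro ⟨σ, m, _, _, h⟩; exact h
  rw [hrw]
  apply MeasurableSet.iUnion; intro σ
  apply MeasurableSet.iUnion; intro m
  have hbase : MeasurableSet {v : Fin n → ℝ × ℕ |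
      (∀ i j, ((v i).1 < (v j).1 ↔ σ i j = true)) ∧ (∀ i, (v i).2 = m i)} := by
    have : {v : Fin n → ℝ × ℕ | (∀ i j, ((v i).1 < (v j).1 ↔ σ i j = true))
        ∧ (∀ i, (v i).2 = m i)}
        = (⋂ i, ⋂ j, {v : Fin n → ℝ × ℕ | (v i).1 < (v j).1 ↔ σ i j = true})
          ∩ ⋂ i, {v : Fin n → ℝ × ℕ | (v i).2 = m i} := by
      ext v
      simp only [Set.mem_setOf_eq, Set.mem_inter_iff, Set.mem_iInter]
    rw [this]
    apply MeasurableSet.inter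
    · apply MeasurableSet.iInter; intro i
      apply MeasurableSet.iInter; intro j
      have hlt : MeasurableSet {v : Fin n → ℝ × ℕ | (v i).1 < (v j).1} :=
        measurableSet_lt (measurable_fst_apply i) (measurable_fst_apply j)
      by_cases hσ : σ i j = true
      · have : {v : Fin n → ℝ × ℕ | (v i).1 < (v j).1 ↔ σ i j = true}
            = {v : Fin n → ℝ × ℕ | (v i).1 < (v j).1} := by
          ext v; simp [hσ]
        rw [this]; exact hlt
      · have : {v : Fin n → ℝ × ℕ | (v i).1 < (v j).1 ↔ σ i j = true}
            = {v : Fin n → ℝ × ℕ | (v i).1 < (v j).1}ᶜ := by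
          ext v; simp [hσ]
        rw [this]; exact hlt.compl
    · apply MeasurableSet.iInter; intro i
      exact (measurable_snd_apply i) (measurableSet_singleton (m i))
  by_cases hex : ∃ w : Fin n → ℝ × ℕ, (∀ i j, ((w i).1 < (w j).1 ↔ σ i j = true))
      ∧ (∀ i, (w i).2 = m i) ∧ gfun n w = c
  · obtain ⟨w, hw1, hw2, hw3⟩ := hex
    have hset : {v : Fin n → ℝ × ℕ | (∀ i j, ((v i).1 < (v j).1 ↔ σ i j = true))
        ∧ (∀ i, (v i).2 = m i) ∧ gfun n v = c}
        = {v : Fin n → ℝ × ℕ | (∀ i j, ((v i).1 < (v j).1 ↔ σ i j = true))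
          ∧ (∀ i, (v i).2 = m i)} := by
      ext v
      simp only [Set.mem_setOf_eq]
      constructor
      · rintro ⟨a, b, _⟩; exact ⟨a, b⟩
      · rintro ⟨a, b⟩
        refine ⟨a, b, ?_⟩
        rw [← hw3]
        exact gfun_congr (fun i j => (a i j).trans (hw1 i j).symm)
          (fun i => (b i).trans (hw2 i).symm)
    rw [hset]; exact hbase
  · have hset : {v : Fin n → ℝ × ℕ | (∀ i j, ((v i).1 < (v j).1 ↔ σ i j = true))
        ∧ (∀ i, (v i).2 = m i) ∧ gfun n v = c} = ∅ := by
      ext v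
      simp only [Set.mem_setOf_eq, Set.mem_empty_iff_false, iff_false]
      intro h
      exact hex ⟨v, h.1, h.2.1, h.2.2⟩
    rw [hset]; exact MeasurableSet.empty

lemma range_map_eq_finRange_map {n : ℕ} {α : Type*} (h : ℕ → α) :
    (List.range n).map h = (List.finRange n).map (fun i : Fin n => h i.val) := by
  apply List.ext_getElem
  · simp
  · intro i h1 h2
    simp

/-! ### probabilistic part -/

instance : IsProbabilityMeasure unif01 := by
  constructor
  rw [unif01, Measure.restrict_apply_univ, Real.volume_Ioo]
  norm_num

lemma measurable_of_nat {α : Type*} [MeasurableSpace α] (f : ℕ → α) : Measurable f :=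
  measurable_from_top

lemma lintegral_antitone_compare {m m' : Measure ℕ} [IsProbabilityMeasure m]
    [IsProbabilityMeasure m']
    (hdom : ∀ k : ℕ, 1 ≤ k → m' (Set.Ici k) ≤ m (Set.Ici k))
    (H : ℕ → ℝ≥0∞) (hmono : ∀ ⦃k l : ℕ⦄, k ≤ l → H l ≤ H k)
    {C : ℝ≥0∞} (hC : C ≠ ⊤) (hHC : ∀ k, H k ≤ C) :
    ∫⁻ k, H k ∂m ≤ ∫⁻ k, H k ∂m' := by
  set G : ℕ → ℝ≥0∞ := fun k => C - H k with hG
  have hGmono : ∀ ⦃k l : ℕ⦄, k ≤ l → G k ≤ G l := fun k l h => tsub_le_tsub_left (hmono h) C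
  have hGC : ∀ k, G k ≤ C := fun k => tsub_le_self
  have hfin : ∀ k, (∑' j : ℕ, Set.indicator (Set.Ici (j + 1)) (fun _ => G (j + 1) - G j) k)
      = ∑ j ∈ Finset.range k, (G (j + 1) - G j) := by
    intro k
    rw [tsum_eq_sum (s := Finset.range k) ?_]
    · refine Finset.sum_congr rfl fun j hj => ?_
      exact Set.indicator_of_mem (Finset.mem_range.mp hj) _
    · intro j hj
      refine Set.indicator_of_notMem ?_ _
      have hjk : ¬ j < k := fun h => hj (Finset.mem_range.mpr h)
      simp only [Set.mem_Ici]
      omega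
  have hrep : ∀ k, G k = G 0 + ∑ j ∈ Finset.range k, (G (j + 1) - G j) := by
    intro k
    induction k with
    | zero => simp
    | succ k ih =>
      rw [Finset.sum_range_succ, ← add_assoc, ← ih,
        add_tsub_cancel_of_le (hGmono (Nat.le_succ k))]
  have hGint : ∀ (ρ : Measure ℕ), IsProbabilityMeasure ρ →
      ∫⁻ k, G k ∂ρ = G 0 + ∑' j : ℕ, (G (j + 1) - G j) * ρ (Set.Ici (j + 1)) := by
    intro ρ hρ
    calc ∫⁻ k, G k ∂ρ
        = ∫⁻ k, (G 0 + ∑' j : ℕ, Set.indicator (Set.Ici (j + 1))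
            (fun _ => G (j + 1) - G j) k) ∂ρ :=
          lintegral_congr fun k => by rw [hfin k]; exact hrep k
      _ = G 0 + ∫⁻ k, (∑' j : ℕ, Set.indicator (Set.Ici (j + 1))
            (fun _ => G (j + 1) - G j) k) ∂ρ := by
          rw [lintegral_add_left measurable_const, lintegral_const, measure_univ, mul_one]
      _ = G 0 + ∑' j : ℕ, ∫⁻ k, Set.indicator (Set.Ici (j + 1))
            (fun _ => G (j + 1) - G j) k ∂ρ := by
          rw [lintegral_tsum fun j => (measurable_of_nat _).aemeasurable]
      _ = G 0 + ∑' j : ℕ, (G (j + 1) - G j) * ρ (Set.Ici (j + 1)) := by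
          congr 1
          refine tsum_congr fun j => ?_
          rw [lintegral_indicator_const MeasurableSpace.measurableSet_top]
  have hGle : ∫⁻ k, G k ∂m' ≤ ∫⁻ k, G k ∂m := by
    rw [hGint m inferInstance, hGint m' inferInstance]
    have hts : (∑' j : ℕ, (G (j + 1) - G j) * m' (Set.Ici (j + 1)))
        ≤ ∑' j : ℕ, (G (j + 1) - G j) * m (Set.Ici (j + 1)) :=
      ENNReal.tsum_le_tsum fun j =>
        mul_le_mul_right (hdom (j + 1) (Nat.succ_le_succ (Nat.zero_le j))) _
    exact add_le_add le_rfl hts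
  have hGfin : ∀ (ρ : Measure ℕ), IsProbabilityMeasure ρ → ∫⁻ k, G k ∂ρ ≠ ⊤ := by
    intro ρ hρ
    refine ne_top_of_le_ne_top ?_ (lintegral_mono hGC)
    rw [lintegral_const, measure_univ, mul_one]
    exact hC
  have hHrep : ∀ (ρ : Measure ℕ), IsProbabilityMeasure ρ →
      ∫⁻ k, H k ∂ρ = C - ∫⁻ k, G k ∂ρ := by
    intro ρ hρ
    have h1 : ∀ k, H k = C - G k := fun k => (ENNReal.sub_sub_cancel hC (hHC k)).symm
    calc ∫⁻ k, H k ∂ρ = ∫⁻ k, (C - G k) ∂ρ := lintegral_congr h1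
      _ = ∫⁻ (_ : ℕ), C ∂ρ - ∫⁻ k, G k ∂ρ :=
          lintegral_sub (measurable_of_nat _) (hGfin ρ hρ) (Filter.Eventually.of_forall hGC)
      _ = C - ∫⁻ k, G k ∂ρ := by rw [lintegral_const, measure_univ, mul_one]
  rw [hHrep m inferInstance, hHrep m' inferInstance]
  exact tsub_le_tsub_left hGle C

lemma gfun_insert_antitone {N : ℕ} (i₀ : Fin (N + 1)) (u : ℝ) (b : Fin N → ℝ × ℕ)
    {k k' : ℕ} (hkk : k' ≤ k) :
    gfun (N + 1) (i₀.insertNth (u, k) b) ≤ gfun (N + 1) (i₀.insertNth (u, k') b) := by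
  apply R_mono
  rw [List.forall₂_map_left_iff, List.forall₂_map_right_iff, List.forall₂_same]
  intro i _
  refine Fin.succAboveCases i₀ ?_ ?_ i
  · rw [Fin.insertNth_apply_same, Fin.insertNth_apply_same]
    exact ⟨rfl, hkk⟩
  · intro j
    rw [Fin.insertNth_apply_succAbove, Fin.insertNth_apply_succAbove]
    exact ⟨rfl, le_rfl⟩

lemma lintegral_swap_coord {N : ℕ} (ms ms' : Fin (N + 1) → Measure ℕ)
    (hprob : ∀ i, IsProbabilityMeasure (ms i)) (hprob' : ∀ i, IsProbabilityMeasure (ms' i))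
    (i₀ : Fin (N + 1)) (heqm : ∀ i, i ≠ i₀ → ms i = ms' i)
    (hdom : ∀ k : ℕ, 1 ≤ k → ms' i₀ (Set.Ici k) ≤ ms i₀ (Set.Ici k)) :
    ∫⁻ v, (gfun (N + 1) v : ℝ≥0∞) ∂(Measure.pi fun i => unif01.prod (ms i))
      ≤ ∫⁻ v, (gfun (N + 1) v : ℝ≥0∞) ∂(Measure.pi fun i => unif01.prod (ms' i)) := by
  haveI := hprob; haveI := hprob'
  set e := MeasurableEquiv.piFinSuccAbove (fun _ : Fin (N + 1) => ℝ × ℕ) i₀ with he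
  have hmeasg : Measurable (fun p : (ℝ × ℕ) × (Fin N → ℝ × ℕ) =>
      ((gfun (N + 1) (e.symm p) : ℝ≥0∞))) :=
    (measurable_of_nat (fun n : ℕ => (n : ℝ≥0∞))).comp
      ((measurable_gfun (N + 1)).comp e.symm.measurable)
  have decomp : ∀ (κ : Fin (N + 1) → Measure ℕ), (∀ i, IsProbabilityMeasure (κ i)) →
      ∫⁻ v, (gfun (N + 1) v : ℝ≥0∞) ∂(Measure.pi fun i => unif01.prod (κ i))
      = ∫⁻ u : ℝ, ∫⁻ k : ℕ, ∫⁻ b, (gfun (N + 1) (e.symm ((u, k), b)) : ℝ≥0∞)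
          ∂(Measure.pi fun j => unif01.prod (κ (i₀.succAbove j))) ∂(κ i₀) ∂unif01 := by
    intro κ hκ
    haveI := hκ
    have hmp := (measurePreserving_piFinSuccAbove (fun i => unif01.prod (κ i)) i₀).symm e
    have hgf : Measurable (fun v : Fin (N + 1) → ℝ × ℕ => ((gfun (N + 1) v : ℝ≥0∞))) :=
      (measurable_of_nat (fun n : ℕ => (n : ℝ≥0∞))).comp (measurable_gfun (N + 1))
    calc ∫⁻ v, (gfun (N + 1) v : ℝ≥0∞) ∂(Measure.pi fun i => unif01.prod (κ i))
        = ∫⁻ p, (gfun (N + 1) (e.symm p) : ℝ≥0∞)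
            ∂((unif01.prod (κ i₀)).prod (Measure.pi fun j => unif01.prod (κ (i₀.succAbove j)))) :=
          (hmp.lintegral_comp hgf).symm
      _ = ∫⁻ a, ∫⁻ b, (gfun (N + 1) (e.symm (a, b)) : ℝ≥0∞)
            ∂(Measure.pi fun j => unif01.prod (κ (i₀.succAbove j))) ∂(unif01.prod (κ i₀)) :=
          lintegral_prod _ hmeasg.aemeasurable
      _ = ∫⁻ u : ℝ, ∫⁻ k : ℕ, ∫⁻ b, (gfun (N + 1) (e.symm ((u, k), b)) : ℝ≥0∞)
            ∂(Measure.pi fun j => unif01.prod (κ (i₀.succAbove j))) ∂(κ i₀) ∂unif01 :=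
          lintegral_prod _ (Measurable.lintegral_prod_right
            (f := fun (a : ℝ × ℕ) (b : Fin N → ℝ × ℕ) =>
              (gfun (N + 1) (e.symm (a, b)) : ℝ≥0∞)) hmeasg).aemeasurable
  have hrest : (fun j => unif01.prod (ms (i₀.succAbove j)))
      = fun j => unif01.prod (ms' (i₀.succAbove j)) :=
    funext fun j => by rw [heqm _ (Fin.succAbove_ne i₀ j)]
  rw [decomp ms hprob, decomp ms' hprob', hrest]
  refine lintegral_mono fun u => ?_
  refine lintegral_antitone_compare hdom _ ?_ (ENNReal.natCast_ne_top (N + 1)) ?_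
  · intro k l hkl
    refine lintegral_mono fun b => ?_
    have : gfun (N + 1) (e.symm ((u, l), b)) ≤ gfun (N + 1) (e.symm ((u, k), b)) :=
      gfun_insert_antitone i₀ u b hkl
    exact (Nat.cast_le (α := ℝ≥0∞)).mpr this
  · intro k
    calc ∫⁻ b, (gfun (N + 1) (e.symm ((u, k), b)) : ℝ≥0∞)
          ∂(Measure.pi fun j => unif01.prod (ms' (i₀.succAbove j)))
        ≤ ∫⁻ _, ((N + 1 : ℕ) : ℝ≥0∞)
          ∂(Measure.pi fun j => unif01.prod (ms' (i₀.succAbove j))) :=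
          lintegral_mono fun b => Nat.cast_le.mpr (gfun_le _ _)
      _ = ((N + 1 : ℕ) : ℝ≥0∞) := by rw [lintegral_const, measure_univ, mul_one]

lemma lintegral_chain {N : ℕ} (μ μ' : Measure ℕ) [IsProbabilityMeasure μ]
    [IsProbabilityMeasure μ']
    (hdom : ∀ k : ℕ, 1 ≤ k → μ' (Set.Ici k) ≤ μ (Set.Ici k)) :
    ∫⁻ v, (gfun (N + 1) v : ℝ≥0∞) ∂(Measure.pi fun _ : Fin (N + 1) => unif01.prod μ)
      ≤ ∫⁻ v, (gfun (N + 1) v : ℝ≥0∞) ∂(Measure.pi fun _ : Fin (N + 1) => unif01.prod μ') := by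
  classical
  have key : ∀ t : ℕ, t ≤ N + 1 →
      ∫⁻ v, (gfun (N + 1) v : ℝ≥0∞) ∂(Measure.pi fun _ : Fin (N + 1) => unif01.prod μ)
      ≤ ∫⁻ v, (gfun (N + 1) v : ℝ≥0∞)
          ∂(Measure.pi fun i : Fin (N + 1) => unif01.prod (if (i : ℕ) < t then μ' else μ)) := by
    intro t
    induction t with
    | zero =>
      intro _
      have : (fun i : Fin (N + 1) => unif01.prod (if (i : ℕ) < 0 then μ' else μ))
          = fun _ : Fin (N + 1) => unif01.prod μ := funext fun i => by simp
      rw [this]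
    | succ t ih =>
      intro ht
      refine (ih (by omega)).trans ?_
      have hi₀lt : t < N + 1 := by omega
      refine lintegral_swap_coord (fun i => if (i : ℕ) < t then μ' else μ)
        (fun i => if (i : ℕ) < t + 1 then μ' else μ)
        (fun i => by split <;> infer_instance)
        (fun i => by split <;> infer_instance)
        ⟨t, hi₀lt⟩ ?_ ?_
      · intro i hi
        have : (i : ℕ) < t ↔ (i : ℕ) < t + 1 := by
          constructor
          · omega
          · intro h
            rcases Nat.lt_succ_iff_lt_or_eq.mp h with h' | h'
            · exact h'
            · exact absurd (Fin.ext h' : i = ⟨t, hi₀lt⟩) hi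
        by_cases hc : (i : ℕ) < t
        · rw [if_pos hc, if_pos (this.mp hc)]
        · rw [if_neg hc, if_neg (fun hcc => hc (this.mpr hcc))]
      · intro k hk
        have e1 : (fun i : Fin (N + 1) => if (i : ℕ) < t then μ' else μ) ⟨t, hi₀lt⟩ = μ := by
          simp
        have e2 : (fun i : Fin (N + 1) => if (i : ℕ) < t + 1 then μ' else μ) ⟨t, hi₀lt⟩ = μ' := by
          simp
        simp only [Fin.val_mk, lt_irrefl, if_false, lt_add_one, if_true]
        exact hdom k hk
  have := key (N + 1) le_rfl
  have hall : (fun i : Fin (N + 1) => unif01.prod (if (i : ℕ) < N + 1 then μ' else μ))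
      = fun _ : Fin (N + 1) => unif01.prod μ' := funext fun i => by rw [if_pos i.isLt]
  rwa [hall] at this

/-! ### identification of the joint law -/

lemma map_joint_eq_pi {Ω : Type} [MeasurableSpace Ω] (P : Measure Ω) [IsProbabilityMeasure P]
    (f : ℕ → Ω → ℝ × ℕ) (hmeas : ∀ i, Measurable (f i))
    (hindep : iIndepFun f P)
    (ρ : Measure (ℝ × ℕ)) [IsProbabilityMeasure ρ] (hlaw : ∀ i, P.map (f i) = ρ) (n : ℕ) :
    P.map (fun ω (i : Fin n) => f i ω) = Measure.pi (fun _ : Fin n => ρ) := by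
  classical
  have hFmeas : Measurable (fun ω (i : Fin n) => f i ω) :=
    measurable_pi_iff.mpr fun i => hmeas i
  refine (Measure.pi_eq fun s hs => ?_).symm
  rw [Measure.map_apply hFmeas (MeasurableSet.univ_pi hs)]
  set sets : ℕ → Set (ℝ × ℕ) := fun i => if h : i < n then s ⟨i, h⟩ else Set.univ with hsets
  have hsets_meas : ∀ i, MeasurableSet (sets i) := by
    intro i
    rw [hsets]
    dsimp only
    split
    · exact hs _
    · exact MeasurableSet.univ
  have hsets_fin : ∀ i : Fin n, sets (i : ℕ) = s i := by
    intro i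
    rw [hsets]
    dsimp only
    rw [dif_pos i.isLt]
  have hpre : (fun ω (i : Fin n) => f i ω) ⁻¹' (Set.pi Set.univ s)
      = ⋂ i ∈ Finset.range n, f i ⁻¹' sets i := by
    ext ω
    simp only [Set.mem_preimage, Set.mem_pi, Set.mem_univ, forall_true_left,
      Set.mem_iInter, Finset.mem_range]
    constructor
    · intro h i hi
      have := h ⟨i, hi⟩
      rw [← hsets_fin ⟨i, hi⟩] at this
      exact this
    · intro h i
      have := h i.val i.isLt
      rw [hsets_fin i] at this
      exact this
  rw [hpre, hindep.measure_inter_preimage_eq_mul (Finset.range n)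
    (fun i _ => hsets_meas i)]
  have hval : ∀ i ∈ Finset.range n, P (f i ⁻¹' sets i) = ρ (sets i) := fun i _ => by
    rw [← hlaw i, Measure.map_apply (hmeas i) (hsets_meas i)]
  calc ∏ i ∈ Finset.range n, P (f i ⁻¹' sets i)
      = ∏ i ∈ Finset.range n, ρ (sets i) := Finset.prod_congr rfl hval
    _ = ∏ i : Fin n, ρ (sets (i : ℕ)) :=
        (Fin.prod_univ_eq_prod_range (fun i => ρ (sets i)) n).symm
    _ = ∏ i : Fin n, ρ (s i) := Finset.prod_congr rfl fun i _ => by rw [hsets_fin i]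


/-- If `μ` stochastically dominates `μ'` then, with the same i.i.d. uniform labels,
`E[𝐑_μ(n)] ≤ E[𝐑_μ'(n)]` for every `n ≥ 1`. -/
theorem stochastic_domination_comparison
    (μ μ' : Measure ℕ) [IsProbabilityMeasure μ] [IsProbabilityMeasure μ']
    (hμ0 : μ {0} = 0) (hμ'0 : μ' {0} = 0)
    (hdom : ∀ k : ℕ, 1 ≤ k → μ' (Set.Ici k) ≤ μ (Set.Ici k))
    {Ω : Type} [MeasurableSpace Ω] (P : Measure Ω) [IsProbabilityMeasure P]
    (U : ℕ → Ω → ℝ) (ν ν' : ℕ → Ω → ℕ)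
    (hmeas : ∀ i, Measurable fun ω => (U i ω, ν i ω))
    (hmeas' : ∀ i, Measurable fun ω => (U i ω, ν' i ω))
    (hindep : iIndepFun (fun i ω => (U i ω, ν i ω)) P)
    (hindep' : iIndepFun (fun i ω => (U i ω, ν' i ω)) P)
    (hlaw : ∀ i, P.map (fun ω => (U i ω, ν i ω)) = unif01.prod μ)
    (hlaw' : ∀ i, P.map (fun ω => (U i ω, ν' i ω)) = unif01.prod μ') :
    ∀ n : ℕ, 1 ≤ n →
      ∫ ω, (Rn U ν n ω : ℝ) ∂P ≤ ∫ ω, (Rn U ν' n ω : ℝ) ∂P := by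
  intro n hn
  obtain ⟨N, rfl⟩ : ∃ N, n = N + 1 := ⟨n - 1, by omega⟩
  have hgmeas : Measurable (fun v : Fin (N + 1) → ℝ × ℕ => ((gfun (N + 1) v : ℕ) : ℝ)) :=
    (measurable_of_nat (fun k : ℕ => (k : ℝ))).comp (measurable_gfun (N + 1))
  have key : ∀ (ν₀ : ℕ → Ω → ℕ), (∀ i, Measurable fun ω => (U i ω, ν₀ i ω)) →
      ∀ (ρ : Measure ℕ), IsProbabilityMeasure ρ →
      iIndepFun (fun i ω => (U i ω, ν₀ i ω)) P →
      (∀ i, P.map (fun ω => (U i ω, ν₀ i ω)) = unif01.prod ρ) →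
      ∫ ω, (Rn U ν₀ (N + 1) ω : ℝ) ∂P
        = (∫⁻ v, (gfun (N + 1) v : ℝ≥0∞)
            ∂(Measure.pi fun _ : Fin (N + 1) => unif01.prod ρ)).toReal := by
    intro ν₀ hm ρ hρ hi hl
    haveI := hρ
    have hF : Measurable (fun ω (i : Fin (N + 1)) => (U i ω, ν₀ i ω)) :=
      measurable_pi_iff.mpr fun i => hm i
    have hmap := map_joint_eq_pi P (fun i ω => (U i ω, ν₀ i ω)) hm hi (unif01.prod ρ) hl (N + 1)
    have hRn : ∀ ω, Rn U ν₀ (N + 1) ω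
        = gfun (N + 1) (fun i : Fin (N + 1) => (U i ω, ν₀ i ω)) := by
      intro ω
      unfold Rn gfun
      rw [range_map_eq_finRange_map (fun i => (U i ω, ν₀ i ω))]
    calc ∫ ω, (Rn U ν₀ (N + 1) ω : ℝ) ∂P
        = ∫ ω, ((gfun (N + 1) (fun i : Fin (N + 1) => (U i ω, ν₀ i ω)) : ℕ) : ℝ) ∂P := by
          refine integral_congr_ae (Filter.Eventually.of_forall fun ω => ?_)
          exact congrArg (fun k : ℕ => (k : ℝ)) (hRn ω)
      _ = ∫ v, ((gfun (N + 1) v : ℕ) : ℝ)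
            ∂(P.map (fun ω (i : Fin (N + 1)) => (U i ω, ν₀ i ω))) :=
          (integral_map hF.aemeasurable hgmeas.aestronglyMeasurable).symm
      _ = ∫ v, ((gfun (N + 1) v : ℕ) : ℝ)
            ∂(Measure.pi fun _ : Fin (N + 1) => unif01.prod ρ) := by rw [hmap]
      _ = (∫⁻ v, (gfun (N + 1) v : ℝ≥0∞)
            ∂(Measure.pi fun _ : Fin (N + 1) => unif01.prod ρ)).toReal := by
          rw [integral_eq_lintegral_of_nonneg_ae
            (Filter.Eventually.of_forall fun v => by positivity)
            hgmeas.aestronglyMeasurable]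
          congr 1
          refine lintegral_congr fun v => ?_
          rw [ENNReal.ofReal_natCast]
  rw [key ν hmeas μ inferInstance hindep hlaw, key ν' hmeas' μ' inferInstance hindep' hlaw']
  have hfin : ∫⁻ v, (gfun (N + 1) v : ℝ≥0∞)
      ∂(Measure.pi fun _ : Fin (N + 1) => unif01.prod μ') ≠ ⊤ := by
    refine ne_top_of_le_ne_top (ENNReal.natCast_ne_top (N + 1)) ?_
    calc ∫⁻ v, (gfun (N + 1) v : ℝ≥0∞) ∂(Measure.pi fun _ : Fin (N + 1) => unif01.prod μ')
        ≤ ∫⁻ _, ((N + 1 : ℕ) : ℝ≥0∞) ∂(Measure.pi fun _ : Fin (N + 1) => unif01.prod μ') :=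
          lintegral_mono fun v => Nat.cast_le.mpr (gfun_le _ _)
      _ = ((N + 1 : ℕ) : ℝ≥0∞) := by rw [lintegral_const, measure_univ, mul_one]
  exact ENNReal.toReal_mono hfin (lintegral_chain μ μ' hdom)

end HeapPatience
end

section
/- Let f : [0,1] → [0,+∞] be non-decreasing, a_f := inf{x : f(x) = +∞}, D_f := {(x,t) ∈ (0,a_f)×(0,+∞) : t > f(x)}, F(x,t,ν) := (x, t−f(x), ν), and B_t := [0,1]×[0,t]. Let ξ be a finite subset of D_f × {1,2,…} whose points have pairwise distinct first coordinates and such that both ξ and F(ξ) have pairwise distinct second coordinates. Then for every t ≥ 0: R(ξ ∩ (B_t×ℕ)) ≤ R(F(ξ ∩ (B_t×ℕ))) ≤ R(F(ξ) ∩ (B_t×ℕ)). -/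
open MeasureTheory ProbabilityTheory Filter Topology
open scoped ENNReal NNReal

namespace HeapPatience

/-- Number of heaps produced by the timed marked points of `l`, processed in
increasing order of their time (second) coordinates. -/
noncomputable def Rtimed (l : List (ℝ × ℝ × ℕ)) : ℕ :=
  R ((l.mergeSort fun p q => decide (p.2.1 ≤ q.2.1)).map fun p => (p.1, p.2.2))



/-! ### Token model -/

noncomputable def mmax (s : Multiset ℝ) : ℝ := WithBot.unbotD 0 s.toList.maximum

lemma mmax_mem {s : Multiset ℝ} (h : s ≠ 0) : mmax s ∈ s := by
  have hl : s.toList ≠ [] := fun hl => h (Multiset.toList_eq_nil.mp hl)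
  cases hm : s.toList.maximum with
  | bot => exact absurd (List.maximum_eq_bot.mp hm) hl
  | coe m =>
    have : m ∈ s.toList := List.maximum_mem hm
    rw [mmax, hm]
    exact Multiset.mem_toList.mp this

lemma le_mmax {s : Multiset ℝ} {a : ℝ} (h : a ∈ s) : a ≤ mmax s := by
  have h1 : (a : WithBot ℝ) ≤ s.toList.maximum :=
    List.le_maximum_of_mem' (Multiset.mem_toList.mpr h)
  cases hm : s.toList.maximum with
  | bot => rw [hm] at h1; exact absurd h1 (by simp)
  | coe m =>
    rw [hm] at h1
    rw [mmax, hm]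
    exact_mod_cast h1

/-- number of tokens strictly below `y` -/
noncomputable def cnt (T : Multiset ℝ) (y : ℝ) : ℕ := (T.filter (· < y)).card

lemma cnt_add (A B : Multiset ℝ) (y : ℝ) : cnt (A + B) y = cnt A y + cnt B y := by
  simp [cnt, Multiset.filter_add]

lemma cnt_cons (a : ℝ) (A : Multiset ℝ) (y : ℝ) :
    cnt (a ::ₘ A) y = (if a < y then 1 else 0) + cnt A y := by
  simp only [cnt, Multiset.filter_cons]
  split_ifs <;> simp <;> omega

lemma cnt_replicate (v : ℕ) (x y : ℝ) :
    cnt (Multiset.replicate v x) y = if x < y then v else 0 := by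
  induction v with
  | zero => simp [cnt]
  | succ n ih =>
    rw [Multiset.replicate_succ, cnt_cons, ih]
    split_ifs <;> omega

lemma cnt_erase {A : Multiset ℝ} {m : ℝ} (h : m ∈ A) (y : ℝ) :
    cnt (A.erase m) y + (if m < y then 1 else 0) = cnt A y := by
  conv_rhs => rw [← Multiset.cons_erase h]
  rw [cnt_cons]; omega

lemma cnt_mono {T : Multiset ℝ} {y z : ℝ} (h : ∀ a ∈ T, a < y → a < z) :
    cnt T y ≤ cnt T z := by
  induction T using Multiset.induction_on with
  | empty => simp [cnt]
  | cons a s ih =>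
    have := ih (fun b hb => h b (Multiset.mem_cons_of_mem hb))
    rw [cnt_cons, cnt_cons]
    have ha := h a (Multiset.mem_cons_self a s)
    split_ifs with h1 h2
    · omega
    · exact absurd (ha h1) h2
    · omega
    · omega

lemma cnt_mono' {T : Multiset ℝ} {y z : ℝ} (h : y ≤ z) : cnt T y ≤ cnt T z :=
  cnt_mono (fun _ _ ha => lt_of_lt_of_le ha h)

lemma cnt_zero_iff {T : Multiset ℝ} {y : ℝ} : cnt T y = 0 ↔ T.filter (· < y) = 0 := by
  rw [cnt, Multiset.card_eq_zero]

lemma cnt_pos_of_ne {T : Multiset ℝ} {y : ℝ} (h : T.filter (· < y) ≠ 0) : 1 ≤ cnt T y := by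
  rcases Nat.eq_zero_or_pos (cnt T y) with h0 | h1
  · exact absurd (cnt_zero_iff.mp h0) h
  · exact h1

/-- Add one token strictly below `x` strictly increases `cnt` at `x`:
if `m ∈ S`, `m < x`, and `¬ m < y`, then `cnt S y + 1 ≤ cnt S x`. -/
lemma cnt_lt_of_between {S : Multiset ℝ} {m x y : ℝ} (hm : m ∈ S) (hmx : m < x)
    (hmy : ¬ m < y) : cnt S y + 1 ≤ cnt S x := by
  have h1 := cnt_erase hm y
  have h2 := cnt_erase hm x
  have h3 : cnt (S.erase m) y ≤ cnt (S.erase m) x :=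
    cnt_mono' (le_trans (le_of_not_gt hmy) (le_of_lt hmx))
  split_ifs at h1 h2 <;> omega

/-- Facts about the maximal token below `x`. -/
lemma mmax_filter_spec {T : Multiset ℝ} {x : ℝ} (h : T.filter (· < x) ≠ 0) :
    mmax (T.filter (· < x)) ∈ T ∧ mmax (T.filter (· < x)) < x ∧
      ∀ z ∈ T, z < x → z ≤ mmax (T.filter (· < x)) := by
  have h1 := mmax_mem h
  rw [Multiset.mem_filter] at h1
  exact ⟨h1.1, h1.2, fun z hz hzx => le_mmax (Multiset.mem_filter.mpr ⟨hz, hzx⟩)⟩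

/-! ### The dynamics on tokens -/

noncomputable def stepT (T : Multiset ℝ) (it : ℝ × ℕ) : Multiset ℝ :=
  if T.filter (· < it.1) = 0 then T + Multiset.replicate it.2 it.1
  else T.erase (mmax (T.filter (· < it.1))) + Multiset.replicate it.2 it.1

noncomputable def rootδ (T : Multiset ℝ) (it : ℝ × ℕ) : ℕ :=
  if T.filter (· < it.1) = 0 then 1 else 0

noncomputable def nroots : Multiset ℝ → List (ℝ × ℕ) → ℕ
  | _, [] => 0
  | T, it :: l => rootδ T it + nroots (stepT T it) l

@[simp] lemma nroots_nil (T : Multiset ℝ) : nroots T List.nil = 0 := rfl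

lemma nroots_cons (T : Multiset ℝ) (it : ℝ × ℕ) (l : List (ℝ × ℕ)) :
    nroots T (it :: l) = rootδ T it + nroots (stepT T it) l := rfl

/-! ### Main domination lemma -/

lemma main_dom : ∀ (l : List (ℝ × ℕ)) (S T : Multiset ℝ) (d : ℕ),
    (∀ y, cnt S y ≤ cnt T y + d) → nroots T l ≤ nroots S l + d := by
  intro l
  induction l with
  | nil => intro S T d _; simp
  | cons it l ih =>
    rintro S T d H
    obtain ⟨x, v⟩ := it
    rw [nroots_cons, nroots_cons, rootδ, rootδ, stepT, stepT]
    simp only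
    have hex : ∀ (A : Multiset ℝ) (y : ℝ),
        cnt (A + Multiset.replicate v x) y = cnt A y + (if x < y then v else 0) := by
      intro A y; rw [cnt_add, cnt_replicate]
    by_cases hT : T.filter (· < x) = 0
    · by_cases hS : S.filter (· < x) = 0
      · -- both root
        rw [if_pos hT, if_pos hS, if_pos hT, if_pos hS]
        have := ih (S + Multiset.replicate v x) (T + Multiset.replicate v x) d
          (fun y => by rw [hex, hex]; have := H y; omega)
        omega
      · -- T roots, S attaches
        rw [if_pos hT, if_neg hS, if_pos hT, if_neg hS]
        obtain ⟨hmS, hmSx, hmSmax⟩ := mmax_filter_spec hS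
        set mS := mmax (S.filter (· < x)) with hmSdef
        have hd : 1 ≤ d := by
          have h1 := cnt_pos_of_ne hS
          have h2 : cnt T x = 0 := cnt_zero_iff.mpr hT
          have := H x; omega
        have key : ∀ y, cnt (S.erase mS + Multiset.replicate v x) y
            ≤ cnt (T + Multiset.replicate v x) y + (d - 1) := by
          intro y
          rw [hex, hex]
          have h1 := cnt_erase hmS y
          have hy := H y
          by_cases hmy : mS < y
          · rw [if_pos hmy] at h1; omega
          · rw [if_neg hmy] at h1
            have h2 : cnt S y + 1 ≤ cnt S x := cnt_lt_of_between hmS hmSx hmy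
            have h3 : cnt T x = 0 := cnt_zero_iff.mpr hT
            have h4 := H x
            omega
        have := ih _ _ (d - 1) key
        omega
    · obtain ⟨hmT, hmTx, hmTmax⟩ := mmax_filter_spec hT
      set mT := mmax (T.filter (· < x)) with hmTdef
      by_cases hS : S.filter (· < x) = 0
      · -- T attaches, S roots
        rw [if_pos hS, if_neg hT, if_pos hS, if_neg hT]
        have key : ∀ y, cnt (S + Multiset.replicate v x) y
            ≤ cnt (T.erase mT + Multiset.replicate v x) y + (d + 1) := by
          intro y
          rw [hex, hex]
          have h1 := cnt_erase hmT y
          have hy := H y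
          split_ifs at h1 <;> omega
        have := ih _ _ (d + 1) key
        omega
      · -- both attach
        rw [if_neg hS, if_neg hT, if_neg hS, if_neg hT]
        obtain ⟨hmS, hmSx, hmSmax⟩ := mmax_filter_spec hS
        set mS := mmax (S.filter (· < x)) with hmSdef
        have key : ∀ y, cnt (S.erase mS + Multiset.replicate v x) y
            ≤ cnt (T.erase mT + Multiset.replicate v x) y + d := by
          intro y
          rw [hex, hex]
          have h1 := cnt_erase hmS y
          have h2 := cnt_erase hmT y
          have hy := H y
          by_cases hmy : mS < y
          · rw [if_pos hmy] at h1
            split_ifs at h2 <;> omega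
          · rw [if_neg hmy] at h1
            by_cases hmy2 : mT < y
            · rw [if_pos hmy2] at h2
              -- mT < y ≤ mS < x
              have h3 : cnt S y + 1 ≤ cnt S x := cnt_lt_of_between hmS hmSx hmy
              have h4 : cnt T x ≤ cnt T y :=
                cnt_mono (fun a ha hax => lt_of_le_of_lt (hmTmax a ha hax) hmy2)
              have h5 := H x
              omega
            · rw [if_neg hmy2] at h2; omega
        have := ih _ _ d key
        omega


lemma filter_replicate_lt {x z : ℝ} (h : ¬ x < z) (v : ℕ) :
    (Multiset.replicate v x).filter (· < z) = 0 := by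
  rw [Multiset.eq_zero_iff_forall_notMem]
  intro a ha
  rw [Multiset.mem_filter, Multiset.mem_replicate] at ha
  exact h (ha.1.2 ▸ ha.2)

lemma filter_add_replicate {T : Multiset ℝ} {x z : ℝ} (h : ¬ x < z) (v : ℕ) :
    (T + Multiset.replicate v x).filter (· < z) = T.filter (· < z) := by
  rw [Multiset.filter_add, filter_replicate_lt h, add_zero]

lemma ind_mono {u w y : ℝ} (h : u ≤ w) :
    (if w < y then (1:ℕ) else 0) ≤ (if u < y then 1 else 0) := by
  split_ifs with h1 h2
  · omega
  · exact absurd (lt_of_le_of_lt h h1) h2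
  · omega
  · omega

lemma ind_le_one (P : Prop) [Decidable P] : (if P then (1:ℕ) else 0) ≤ 1 := by
  split_ifs <;> omega

/-- Adding tokens at a label at least as large as every item label does not change the
number of roots. -/
lemma nroots_add_high : ∀ (l : List (ℝ × ℕ)) (T : Multiset ℝ) (x : ℝ) (v : ℕ),
    (∀ p ∈ l, p.1 ≤ x) → nroots (T + Multiset.replicate v x) l = nroots T l := by
  intro l
  induction l with
  | nil => simp
  | cons it l ih =>
    intro T x v hl
    obtain ⟨z, w⟩ := it
    have hz : z ≤ x := hl (z, w) (List.mem_cons_self)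
    have hxz : ¬ x < z := not_lt.mpr hz
    have hfilt : (T + Multiset.replicate v x).filter (· < z) = T.filter (· < z) :=
      filter_add_replicate hxz v
    rw [nroots_cons, nroots_cons, rootδ, rootδ, stepT, stepT]
    simp only [hfilt]
    have hl' : ∀ p ∈ l, p.1 ≤ x := fun p hp => hl p (List.mem_cons_of_mem _ hp)
    by_cases hC : T.filter (· < z) = 0
    · rw [if_pos hC, if_pos hC, if_pos hC]
      have : T + Multiset.replicate v x + Multiset.replicate w z
          = T + Multiset.replicate w z + Multiset.replicate v x := by
        rw [add_right_comm]
      rw [this, ih _ _ _ hl']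
    · rw [if_neg hC, if_neg hC, if_neg hC]
      have hm : mmax (T.filter (· < z)) ∈ T := (mmax_filter_spec hC).1
      have : (T + Multiset.replicate v x).erase (mmax (T.filter (· < z)))
          = T.erase (mmax (T.filter (· < z))) + Multiset.replicate v x :=
        Multiset.erase_add_left_pos _ hm
      rw [this, add_right_comm, ih _ _ _ hl']

/-- Inserting an item whose label is at least as large as all labels of the remaining
items cannot decrease the number of roots. -/
lemma nroots_le_cons {l : List (ℝ × ℕ)} {T : Multiset ℝ} {e : ℝ × ℕ}
    (hl : ∀ p ∈ l, p.1 ≤ e.1) : nroots T l ≤ nroots T (e :: l) := by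
  obtain ⟨x, v⟩ := e
  rw [nroots_cons, rootδ, stepT]
  simp only
  by_cases hC : T.filter (· < x) = 0
  · rw [if_pos hC, if_pos hC, nroots_add_high _ _ _ _ hl]
    omega
  · rw [if_neg hC, if_neg hC, nroots_add_high _ _ _ _ hl]
    have hm : mmax (T.filter (· < x)) ∈ T := (mmax_filter_spec hC).1
    have := main_dom l (T.erase (mmax (T.filter (· < x)))) T 0
      (fun y => by have := cnt_erase hm y; split_ifs at this <;> omega)
    omega

/-- Removing an item in the middle whose label is at least as large as all labels of the
later items cannot increase the number of roots. -/
lemma nroots_remove_mid : ∀ (w : List (ℝ × ℕ)) (T : Multiset ℝ) (e : ℝ × ℕ)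
    (rest : List (ℝ × ℕ)), (∀ p ∈ rest, p.1 ≤ e.1) →
    nroots T (w ++ rest) ≤ nroots T (w ++ e :: rest) := by
  intro w
  induction w with
  | nil => intro T e rest h; exact nroots_le_cons h
  | cons c w' ih =>
    intro T e rest h
    rw [List.cons_append, List.cons_append, nroots_cons, nroots_cons]
    exact Nat.add_le_add_left (ih _ _ _ h) _

/-- The adjacent swap lemma: exchanging two adjacent items so that the one with the
larger label is treated first cannot decrease the number of roots. -/
lemma nroots_swap {U : Multiset ℝ} {xa xb : ℝ} {va vb : ℕ} {l : List (ℝ × ℕ)}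
    (hab : xa < xb) (hva : 1 ≤ va) :
    nroots U ((xa, va) :: (xb, vb) :: l) ≤ nroots U ((xb, vb) :: (xa, va) :: l) := by
  rw [nroots_cons, nroots_cons, nroots_cons, nroots_cons]
  by_cases hCa : U.filter (· < xa) = 0
  · -- a roots on the left
    have hL1 : rootδ U (xa, va) = 1 := by rw [rootδ, if_pos hCa]
    have hU1 : stepT U (xa, va) = U + Multiset.replicate va xa := by
      rw [stepT, if_pos hCa]
    -- the filter of U₁ below xb is nonempty (contains xa)
    have hxamem : xa ∈ (U + Multiset.replicate va xa).filter (· < xb) := by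
      rw [Multiset.mem_filter, Multiset.mem_add, Multiset.mem_replicate]
      exact ⟨Or.inr ⟨by omega, rfl⟩, hab⟩
    have hC1b : (U + Multiset.replicate va xa).filter (· < xb) ≠ 0 := by
      intro h0; rw [h0] at hxamem; exact absurd hxamem (Multiset.notMem_zero _)
    set mB' := mmax ((U + Multiset.replicate va xa).filter (· < xb)) with hmB'def
    obtain ⟨hmB'mem, hmB'lt, hmB'max⟩ := mmax_filter_spec hC1b
    have hL2 : rootδ (stepT U (xa, va)) (xb, vb) = 0 := by
      rw [hU1, rootδ, if_neg hC1b]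
    have hUL : stepT (stepT U (xa, va)) (xb, vb)
        = (U + Multiset.replicate va xa).erase mB' + Multiset.replicate vb xb := by
      rw [hU1, stepT, if_neg hC1b]
    by_cases hCb : U.filter (· < xb) = 0
    · -- Case 1 : both Ca and Cb empty; on the right b and a both root
      have hR1 : rootδ U (xb, vb) = 1 := by rw [rootδ, if_pos hCb]
      have hV1 : stepT U (xb, vb) = U + Multiset.replicate vb xb := by
        rw [stepT, if_pos hCb]
      have hV1f : (U + Multiset.replicate vb xb).filter (· < xa) = 0 := by
        rw [filter_add_replicate (not_lt.mpr (le_of_lt hab)), hCa]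
      have hR2 : rootδ (stepT U (xb, vb)) (xa, va) = 1 := by
        rw [hV1, rootδ, if_pos hV1f]
      have hUR : stepT (stepT U (xb, vb)) (xa, va)
          = U + Multiset.replicate vb xb + Multiset.replicate va xa := by
        rw [hV1, stepT, if_pos hV1f]
      rw [hL1, hL2, hUL, hR1, hR2, hUR]
      have key := main_dom l
        (U + Multiset.replicate vb xb + Multiset.replicate va xa)
        ((U + Multiset.replicate va xa).erase mB' + Multiset.replicate vb xb) 1 ?_
      · omega
      · intro y
        have e1 := cnt_erase hmB'mem y
        have hle1 := ind_le_one (mB' < y)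
        simp only [← hmB'def] at e1
        simp only [cnt_add, cnt_replicate] at e1 ⊢
        omega
    · -- Case 2 : Ca empty, Cb nonempty; on the right b attaches and a roots
      set mB := mmax (U.filter (· < xb)) with hmBdef
      obtain ⟨hmBmem, hmBlt, hmBmax⟩ := mmax_filter_spec hCb
      have hR1 : rootδ U (xb, vb) = 0 := by rw [rootδ, if_neg hCb]
      have hV1 : stepT U (xb, vb) = U.erase mB + Multiset.replicate vb xb := by
        rw [stepT, if_neg hCb]
      have hV1f : (U.erase mB + Multiset.replicate vb xb).filter (· < xa) = 0 := by
        rw [filter_add_replicate (not_lt.mpr (le_of_lt hab))]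
        have : (U.erase mB).filter (· < xa) ≤ U.filter (· < xa) :=
          Multiset.filter_le_filter _ (Multiset.erase_le _ _)
        rw [hCa] at this
        exact Multiset.le_zero.mp this
      have hR2 : rootδ (stepT U (xb, vb)) (xa, va) = 1 := by
        rw [hV1, rootδ, if_pos hV1f]
      have hUR : stepT (stepT U (xb, vb)) (xa, va)
          = U.erase mB + Multiset.replicate vb xb + Multiset.replicate va xa := by
        rw [hV1, stepT, if_pos hV1f]
      -- mB ≤ mB'
      have hmBmB' : mB ≤ mB' := by
        refine hmB'max mB ?_ hmBlt
        exact Multiset.mem_add.mpr (Or.inl hmBmem)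
      rw [hL1, hL2, hUL, hR1, hR2, hUR]
      have key := main_dom l
        (U.erase mB + Multiset.replicate vb xb + Multiset.replicate va xa)
        ((U + Multiset.replicate va xa).erase mB' + Multiset.replicate vb xb) 0 ?_
      · omega
      · intro y
        have e1 := cnt_erase hmB'mem y
        have e2 := cnt_erase hmBmem y
        have hle1 : (if mB' < y then (1:ℕ) else 0) ≤ (if mB < y then 1 else 0) :=
          ind_mono hmBmB'
        simp only [← hmB'def, ← hmBdef] at e1 e2
        simp only [cnt_add, cnt_replicate] at e1 e2 ⊢
        omega
  · -- Case 3 : Ca nonempty; a attaches on the left, and then b attaches as well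
    set mA := mmax (U.filter (· < xa)) with hmAdef
    obtain ⟨hmAmem, hmAlt, hmAmax⟩ := mmax_filter_spec hCa
    have hCb : U.filter (· < xb) ≠ 0 := by
      intro h0
      have : mA ∈ U.filter (· < xb) :=
        Multiset.mem_filter.mpr ⟨hmAmem, lt_trans hmAlt hab⟩
      rw [h0] at this; exact absurd this (Multiset.notMem_zero _)
    set mB := mmax (U.filter (· < xb)) with hmBdef
    obtain ⟨hmBmem, hmBlt, hmBmax⟩ := mmax_filter_spec hCb
    have hmAmB : mA ≤ mB := hmBmax mA hmAmem (lt_trans hmAlt hab)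
    have hL1 : rootδ U (xa, va) = 0 := by rw [rootδ, if_neg hCa]
    have hU1 : stepT U (xa, va) = U.erase mA + Multiset.replicate va xa := by
      rw [stepT, if_neg hCa]
    have hxamem : xa ∈ (U.erase mA + Multiset.replicate va xa).filter (· < xb) := by
      rw [Multiset.mem_filter, Multiset.mem_add, Multiset.mem_replicate]
      exact ⟨Or.inr ⟨by omega, rfl⟩, hab⟩
    have hC1b : (U.erase mA + Multiset.replicate va xa).filter (· < xb) ≠ 0 := by
      intro h0; rw [h0] at hxamem; exact absurd hxamem (Multiset.notMem_zero _)
    set mB' := mmax ((U.erase mA + Multiset.replicate va xa).filter (· < xb)) with hmB'def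
    obtain ⟨hmB'mem, hmB'lt, hmB'max⟩ := mmax_filter_spec hC1b
    have hL2 : rootδ (stepT U (xa, va)) (xb, vb) = 0 := by
      rw [hU1, rootδ, if_neg hC1b]
    have hUL : stepT (stepT U (xa, va)) (xb, vb)
        = (U.erase mA + Multiset.replicate va xa).erase mB'
          + Multiset.replicate vb xb := by
      rw [hU1, stepT, if_neg hC1b]
    have hR1 : rootδ U (xb, vb) = 0 := by rw [rootδ, if_neg hCb]
    have hV1 : stepT U (xb, vb) = U.erase mB + Multiset.replicate vb xb := by
      rw [stepT, if_neg hCb]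
    -- mB ≤ mB'
    have hmBmB' : mB ≤ mB' := by
      by_cases hBA : mB = mA
      · have hxa1 : xa ∈ U.erase mA + Multiset.replicate va xa :=
          Multiset.mem_add.mpr (Or.inr (Multiset.mem_replicate.mpr ⟨by omega, rfl⟩))
        have : xa ≤ mB' := hmB'max xa hxa1 hab
        rw [hBA]; exact le_trans (le_of_lt hmAlt) this
      · refine hmB'max mB ?_ hmBlt
        exact Multiset.mem_add.mpr (Or.inl ((Multiset.mem_erase_of_ne hBA).mpr hmBmem))
    have hV1fa : (U.erase mB + Multiset.replicate vb xb).filter (· < xa)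
        = (U.erase mB).filter (· < xa) :=
      filter_add_replicate (not_lt.mpr (le_of_lt hab)) vb
    by_cases hC1a : (U.erase mB).filter (· < xa) = 0
    · -- Case 3a : a roots on the right; then mA = mB
      have hABeq : mA = mB := by
        by_contra hne
        have : mA ∈ (U.erase mB).filter (· < xa) :=
          Multiset.mem_filter.mpr ⟨(Multiset.mem_erase_of_ne hne).mpr hmAmem, hmAlt⟩
        rw [hC1a] at this; exact absurd this (Multiset.notMem_zero _)
      have hR2 : rootδ (stepT U (xb, vb)) (xa, va) = 1 := by
        rw [hV1, rootδ, hV1fa, if_pos hC1a]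
      have hUR : stepT (stepT U (xb, vb)) (xa, va)
          = U.erase mB + Multiset.replicate vb xb + Multiset.replicate va xa := by
        rw [hV1, stepT, hV1fa, if_pos hC1a]
      rw [hL1, hL2, hUL, hR1, hR2, hUR]
      have key := main_dom l
        (U.erase mB + Multiset.replicate vb xb + Multiset.replicate va xa)
        ((U.erase mA + Multiset.replicate va xa).erase mB'
          + Multiset.replicate vb xb) 1 ?_
      · omega
      · intro y
        have e1 := cnt_erase hmB'mem y
        have e2 := cnt_erase hmBmem y
        have e3 := cnt_erase hmAmem y
        have hle1 := ind_le_one (mB' < y)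
        have hii : (if mA < y then (1:ℕ) else 0) = (if mB < y then 1 else 0) := by
          rw [hABeq]
        simp only [← hmB'def, ← hmBdef, ← hmAdef] at e1 e2 e3
        simp only [cnt_add, cnt_replicate] at e1 e2 e3 ⊢
        omega
    · -- Case 3b : a attaches on the right as well
      set mA' := mmax ((U.erase mB).filter (· < xa)) with hmA'def
      obtain ⟨hmA'mem, hmA'lt, hmA'max⟩ := mmax_filter_spec hC1a
      have hmA'mA : mA' ≤ mA :=
        hmAmax mA' (Multiset.mem_of_le (Multiset.erase_le _ _) hmA'mem) hmA'lt
      have hR2 : rootδ (stepT U (xb, vb)) (xa, va) = 0 := by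
        rw [hV1, rootδ, hV1fa, if_neg hC1a]
      have hUR : stepT (stepT U (xb, vb)) (xa, va)
          = (U.erase mB + Multiset.replicate vb xb).erase mA'
            + Multiset.replicate va xa := by
        rw [hV1, stepT, hV1fa, if_neg hC1a]
      rw [hL1, hL2, hUL, hR1, hR2, hUR]
      have key := main_dom l
        ((U.erase mB + Multiset.replicate vb xb).erase mA' + Multiset.replicate va xa)
        ((U.erase mA + Multiset.replicate va xa).erase mB'
          + Multiset.replicate vb xb) 0 ?_
      · omega
      · intro y
        have hmA'memV : mA' ∈ U.erase mB + Multiset.replicate vb xb :=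
          Multiset.mem_add.mpr (Or.inl hmA'mem)
        have e1 := cnt_erase hmB'mem y
        have e2 := cnt_erase hmBmem y
        have e3 := cnt_erase hmAmem y
        have e4 := cnt_erase hmA'memV y
        have hle1 : (if mB' < y then (1:ℕ) else 0) ≤ (if mB < y then 1 else 0) :=
          ind_mono hmBmB'
        have hle2 : (if mA < y then (1:ℕ) else 0) ≤ (if mA' < y then 1 else 0) :=
          ind_mono hmA'mA
        simp only [← hmB'def, ← hmBdef, ← hmAdef, ← hmA'def] at e1 e2 e3 e4
        simp only [cnt_add, cnt_replicate] at e1 e2 e3 e4 ⊢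
        omega


/-! ### Bridge between `run`/`R` and the token model -/

noncomputable def tok : List (ℝ × ℕ) → Multiset ℝ
  | [] => 0
  | p :: σ => Multiset.replicate p.2 p.1 + tok σ

lemma mem_tok {σ : List (ℝ × ℕ)} {x : ℝ} :
    x ∈ tok σ ↔ ∃ p ∈ σ, p.1 = x ∧ 0 < p.2 := by
  induction σ with
  | nil => simp [tok]
  | cons p σ ih =>
    simp only [tok, Multiset.mem_add, Multiset.mem_replicate, ih, List.mem_cons]
    constructor
    · rintro (⟨h1, h2⟩ | ⟨q, hq, hq1, hq2⟩)
      · exact ⟨p, Or.inl rfl, h2.symm, by omega⟩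
      · exact ⟨q, Or.inr hq, hq1, hq2⟩
    · rintro ⟨q, (rfl | hq), hq1, hq2⟩
      · exact Or.inl ⟨by omega, hq1.symm⟩
      · exact Or.inr ⟨q, hq, hq1, hq2⟩

lemma erase_replicate (n : ℕ) (a : ℝ) :
    (Multiset.replicate n a).erase a = Multiset.replicate (n - 1) a := by
  cases n with
  | zero => simp
  | succ n => rw [Multiset.replicate_succ, Multiset.erase_cons_head]; rfl

lemma tok_decrementAt : ∀ {σ : List (ℝ × ℕ)} {x : ℝ},
    (∃ p ∈ σ, p.1 = x ∧ 0 < p.2) → tok (decrementAt σ x) = (tok σ).erase x := by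
  intro σ
  induction σ with
  | nil => rintro x ⟨p, hp, -⟩; exact absurd hp (List.not_mem_nil)
  | cons p σ ih =>
    rintro x ⟨q, hq, hq1, hq2⟩
    rw [decrementAt]
    by_cases hc : p.1 = x ∧ 0 < p.2
    · rw [if_pos hc]
      have hx : x ∈ Multiset.replicate p.2 p.1 :=
        Multiset.mem_replicate.mpr ⟨by omega, hc.1.symm⟩
      rw [tok, tok, Multiset.erase_add_left_pos _ hx, ← hc.1, erase_replicate]
    · rw [if_neg hc]
      have hq' : q ∈ σ := by
        rcases List.mem_cons.mp hq with rfl | h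
        · exact absurd ⟨hq1, hq2⟩ hc
        · exact h
      have hx : x ∈ tok σ := mem_tok.mpr ⟨q, hq', hq1, hq2⟩
      rw [tok, tok, Multiset.erase_add_right_pos _ hx, ih ⟨q, hq', hq1, hq2⟩]

lemma step_bridge_s15 (σ : List (ℝ × ℕ)) (k : ℕ) (it : ℝ × ℕ) :
    tok ((step (σ, k) it).1) = stepT (tok σ) it ∧
      (step (σ, k) it).2 = k + rootδ (tok σ) it := by
  rw [step]
  cases hm : (σ.filter fun p => decide (0 < p.2 ∧ p.1 < it.1)).argmax Prod.fst with
  | none =>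
    have hnil : σ.filter (fun p => decide (0 < p.2 ∧ p.1 < it.1)) = [] :=
      List.argmax_eq_none.mp hm
    have hC : (tok σ).filter (· < it.1) = 0 := by
      rw [Multiset.eq_zero_iff_forall_notMem]
      intro z hz
      rw [Multiset.mem_filter, mem_tok] at hz
      obtain ⟨⟨p, hp, hp1, hp2⟩, hzlt⟩ := hz
      have : p ∈ σ.filter (fun p => decide (0 < p.2 ∧ p.1 < it.1)) :=
        List.mem_filter.mpr ⟨hp, decide_eq_true ⟨hp2, hp1 ▸ hzlt⟩⟩
      rw [hnil] at this
      exact absurd this (List.not_mem_nil)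
    constructor
    · rw [tok, stepT, if_pos hC, add_comm]
    · rw [rootδ, if_pos hC]
      try rfl
  | some q =>
    have hqf := List.argmax_mem hm
    have hq := List.mem_filter.mp hqf
    have hq2 : 0 < q.2 ∧ q.1 < it.1 := of_decide_eq_true hq.2
    have hqtok : q.1 ∈ tok σ := mem_tok.mpr ⟨q, hq.1, rfl, hq2.1⟩
    have hqC : q.1 ∈ (tok σ).filter (· < it.1) :=
      Multiset.mem_filter.mpr ⟨hqtok, hq2.2⟩
    have hC : (tok σ).filter (· < it.1) ≠ 0 := by
      intro h0; rw [h0] at hqC; exact absurd hqC (Multiset.notMem_zero _)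
    obtain ⟨hmm, hmlt, hmmax⟩ := mmax_filter_spec hC
    have hmq : mmax ((tok σ).filter (· < it.1)) = q.1 := by
      refine le_antisymm ?_ (le_mmax hqC)
      obtain ⟨p, hp, hp1, hp2⟩ := mem_tok.mp hmm
      have : p ∈ σ.filter (fun p => decide (0 < p.2 ∧ p.1 < it.1)) :=
        List.mem_filter.mpr ⟨hp, decide_eq_true ⟨hp2, hp1 ▸ hmlt⟩⟩
      have hle := List.le_of_mem_argmax this hm
      calc mmax ((tok σ).filter (· < it.1)) = p.1 := hp1.symm
        _ ≤ q.1 := hle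
    constructor
    · rw [tok, stepT, if_neg hC, hmq,
        tok_decrementAt ⟨q, hq.1, rfl, hq2.1⟩, add_comm]
    · rw [rootδ, if_neg hC]
      rfl

lemma run_bridge_s15 : ∀ (items : List (ℝ × ℕ)) (σ : List (ℝ × ℕ)) (k : ℕ),
    (items.foldl step (σ, k)).2 = k + nroots (tok σ) items := by
  intro items
  induction items with
  | nil => intro σ k; simp [nroots]
  | cons it items ih =>
    intro σ k
    rw [List.foldl_cons, nroots_cons]
    obtain ⟨h1, h2⟩ := step_bridge_s15 σ k it
    have : step (σ, k) it = ((step (σ, k) it).1, (step (σ, k) it).2) := rfl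
    rw [this, ih, h1, h2]
    omega

lemma R_eq_nroots (items : List (ℝ × ℕ)) : R items = nroots 0 items := by
  rw [R, run, run_bridge_s15]
  simp [tok]


/-! ### Master rearrangement lemmas -/

/-- Projection of a timed marked point onto its (label, lives) item. -/
def πP (p : ℝ × ℝ × ℕ) : ℝ × ℕ := (p.1, p.2.2)

/-- Bubbling an item over a block of items with smaller label. -/
lemma nroots_bubble : ∀ (w : List (ℝ × ℕ)) (U : Multiset ℝ) (e : ℝ × ℕ)
    (u : List (ℝ × ℕ)), (∀ c ∈ w, c.1 < e.1 ∧ 1 ≤ c.2) →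
    nroots U (w ++ e :: u) ≤ nroots U (e :: (w ++ u)) := by
  intro w
  induction w with
  | nil => intro U e u _; exact le_refl _
  | cons c w' ih =>
    intro U e u hw
    have hc := hw c (List.mem_cons_self)
    have hw' : ∀ x ∈ w', x.1 < e.1 ∧ 1 ≤ x.2 :=
      fun x hx => hw x (List.mem_cons_of_mem _ hx)
    calc nroots U ((c :: w') ++ e :: u)
        = rootδ U c + nroots (stepT U c) (w' ++ e :: u) := by
          rw [List.cons_append, nroots_cons]
      _ ≤ rootδ U c + nroots (stepT U c) (e :: (w' ++ u)) :=
          Nat.add_le_add_left (ih _ _ _ hw') _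
      _ = nroots U (c :: e :: (w' ++ u)) := (nroots_cons _ _ _).symm
      _ ≤ nroots U (e :: c :: (w' ++ u)) := by
          obtain ⟨c1, c2⟩ := c
          obtain ⟨e1, e2⟩ := e
          exact nroots_swap hc.1 hc.2
      _ = nroots U (e :: ((c :: w') ++ u)) := by rw [List.cons_append]

/-- Master lemma 1: re-sorting the list so that, whenever two items are exchanged, the
one with the larger label comes first, cannot decrease the number of roots. -/
lemma master1 (g : ℝ × ℝ × ℕ → ℝ) : ∀ (l' l : List (ℝ × ℝ × ℕ)) (U : Multiset ℝ),
    l.Perm l' →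
    l.Pairwise (fun p q => p.2.1 < q.2.1) →
    l'.Pairwise (fun p q => g p < g q) →
    (∀ p ∈ l, ∀ q ∈ l, p.2.1 < q.2.1 → g q < g p → p.1 < q.1) →
    (∀ p ∈ l, 1 ≤ p.2.2) →
    nroots U (l.map πP) ≤ nroots U (l'.map πP) := by
  intro l'
  induction l' with
  | nil => intro l U hperm _ _ _ _; rw [hperm.eq_nil]
  | cons h t' ih =>
    intro l U hperm hpw1 hpw2 hinv hlives
    have hhl : h ∈ l := hperm.mem_iff.mpr (List.mem_cons_self)
    obtain ⟨w, u, rfl⟩ := List.append_of_mem hhl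
    have hperm2 : (w ++ u).Perm t' := by
      have h1 : (w ++ h :: u).Perm (h :: (w ++ u)) := List.perm_middle
      exact (h1.symm.trans hperm).cons_inv
    have hwlt : ∀ c ∈ w, c.1 < h.1 ∧ 1 ≤ c.2.2 := by
      intro c hc
      have hcl : c ∈ w ++ h :: u := List.mem_append_left _ hc
      have hct' : c ∈ t' := hperm2.mem_iff.mp (List.mem_append_left _ hc)
      have h1 : c.2.1 < h.2.1 := by
        rw [List.pairwise_append] at hpw1
        exact hpw1.2.2 c hc h (List.mem_cons_self)
      have h2 : g h < g c := (List.pairwise_cons.mp hpw2).1 c hct'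
      exact ⟨hinv c hcl h hhl h1 h2, hlives c hcl⟩
    calc nroots U ((w ++ h :: u).map πP)
        = nroots U (w.map πP ++ πP h :: u.map πP) := by
          rw [List.map_append, List.map_cons]
      _ ≤ nroots U (πP h :: (w.map πP ++ u.map πP)) := by
          refine nroots_bubble _ _ _ _ ?_
          intro c hc
          obtain ⟨c', hc', rfl⟩ := List.mem_map.mp hc
          exact hwlt c' hc'
      _ = rootδ U (πP h) + nroots (stepT U (πP h)) ((w ++ u).map πP) := by
          rw [nroots_cons, List.map_append]
      _ ≤ rootδ U (πP h) + nroots (stepT U (πP h)) (t'.map πP) := by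
          refine Nat.add_le_add_left ?_ _
          refine ih (w ++ u) _ hperm2 ?_ ?_ ?_ ?_
          · refine List.Pairwise.sublist ?_ hpw1
            exact List.Sublist.append_left (List.sublist_cons_self _ _) w
          · exact (List.pairwise_cons.mp hpw2).2
          · intro p hp q hq
            have hsub : List.Sublist (w ++ u) (w ++ h :: u) :=
              List.Sublist.append_left (List.sublist_cons_self _ _) w
            exact hinv p (hsub.mem hp) q (hsub.mem hq)
          · intro p hp
            have hsub : List.Sublist (w ++ u) (w ++ h :: u) :=
              List.Sublist.append_left (List.sublist_cons_self _ _) w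
            exact hlives p (hsub.mem hp)
      _ = nroots U ((h :: t').map πP) := by rw [List.map_cons, nroots_cons]

/-- Finding the last element of `l3` missing from the sublist `l2`. -/
lemma last_extra {α : Type*} : ∀ (l3 l2 : List α), List.Sublist l2 l3 → l3.Nodup → l2 ≠ l3 →
    ∃ w e rest, l3 = w ++ e :: rest ∧ e ∉ l2 ∧ (∀ r ∈ rest, r ∈ l2) ∧ List.Sublist l2 (w ++ rest) := by
  intro l3
  induction l3 using List.reverseRecOn with
  | nil =>
    intro l2 hsub _ hne
    exact absurd (List.sublist_nil.mp hsub) hne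
  | append_singleton m a ihm =>
    intro l2 hsub hnd hne
    have hnd' := List.nodup_append.mp hnd
    by_cases ha : a ∈ l2
    · -- l2 ends with a
      obtain ⟨u, v, rfl, hu, hv⟩ := List.sublist_append_iff.mp hsub
      rcases List.sublist_singleton.mp hv with rfl | rfl
      · -- v = [] : then a ∈ u <+ m, contradicting nodup
        rw [List.append_nil] at ha
        have : a ∈ m := hu.mem ha
        exact (hnd'.2.2 _ this _ (List.mem_singleton.mpr rfl) rfl).elim
      · -- v = [a]
        have hum : u ≠ m := by
          rintro rfl
          exact hne rfl
        obtain ⟨w, e, rest, rfl, he, hrest, hsub'⟩ := ihm u hu hnd'.1 hum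
        refine ⟨w, e, rest ++ [a], by rw [List.append_assoc, List.cons_append], ?_, ?_, ?_⟩
        · intro hmem
          rcases List.mem_append.mp hmem with h1 | h1
          · exact he h1
          · have : e ∈ w ++ e :: rest := List.mem_append_right _ (List.mem_cons_self)
            rcases List.mem_singleton.mp h1 with rfl
            exact hnd'.2.2 _ this _ (List.mem_singleton.mpr rfl) rfl
        · intro r hr
          rcases List.mem_append.mp hr with h1 | h1
          · exact List.mem_append_left _ (hrest r h1)
          · rcases List.mem_singleton.mp h1 with rfl
            exact List.mem_append_right _ (List.mem_singleton.mpr rfl)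
        · have : List.Sublist (u ++ [a]) ((w ++ rest) ++ [a]) := hsub'.append (List.Sublist.refl _)
          rwa [List.append_assoc] at this
    · -- a ∉ l2 : a is the last extra
      refine ⟨m, a, List.nil, rfl, ha, by simp, ?_⟩
      rw [List.append_nil]
      obtain ⟨u, v, rfl, hu, hv⟩ := List.sublist_append_iff.mp hsub
      rcases List.sublist_singleton.mp hv with rfl | rfl
      · rwa [List.append_nil]
      · exact absurd (List.mem_append_right _ (List.mem_singleton.mpr rfl)) ha
    
/-- Master lemma 2: removing items each of which has a larger label than every later
surviving item cannot increase the number of roots. -/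
lemma master2 : ∀ (n : ℕ) (l3 l2 : List (ℝ × ℝ × ℕ)) (U : Multiset ℝ),
    l3.length ≤ n → List.Sublist l2 l3 →
    l3.Pairwise (fun p q => p.2.1 < q.2.1) →
    (∀ e ∈ l3, e ∉ l2 → ∀ r ∈ l2, e.2.1 < r.2.1 → r.1 < e.1) →
    nroots U (l2.map πP) ≤ nroots U (l3.map πP) := by
  intro n
  induction n with
  | zero =>
    intro l3 l2 U hlen hsub _ _
    have h0 : l3 = List.nil := List.length_eq_zero_iff.mp (Nat.le_zero.mp hlen)
    subst h0
    rw [List.sublist_nil.mp hsub]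
  | succ n ihn =>
    intro l3 l2 U hlen hsub hpw hcond
    by_cases heq : l2 = l3
    · subst heq; exact le_refl _
    · have hnd : l3.Nodup := by
        refine hpw.imp ?_
        intro a b hab habeq
        rw [habeq] at hab
        exact lt_irrefl _ hab
      obtain ⟨w, e, rest, rfl, he, hrest, hsub'⟩ := last_extra l3 l2 hsub hnd heq
      have hwrest : List.Sublist (w ++ rest) (w ++ e :: rest) :=
        List.Sublist.append_left (List.sublist_cons_self _ _) w
      have step1 : nroots U (l2.map πP) ≤ nroots U ((w ++ rest).map πP) := by
        refine ihn (w ++ rest) l2 U ?_ hsub' (List.Pairwise.sublist hwrest hpw) ?_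
        · have := List.length_append (as := w) (bs := e :: rest)
          have h2 := List.length_append (as := w) (bs := rest)
          simp only [List.length_cons] at this
          omega
        · intro e' he1 he2 r hr
          exact hcond e' (hwrest.mem he1) he2 r hr
      have step2 : nroots U ((w ++ rest).map πP) ≤ nroots U ((w ++ e :: rest).map πP) := by
        rw [List.map_append, List.map_append, List.map_cons]
        refine nroots_remove_mid _ _ _ _ ?_
        intro p hp
        obtain ⟨r, hr, rfl⟩ := List.mem_map.mp hp
        have hre : e.2.1 < r.2.1 := by
          rw [List.pairwise_append] at hpw
          exact (List.pairwise_cons.mp hpw.2.1).1 r hr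
        have := hcond e (List.mem_append_right _ (List.mem_cons_self)) he r
          (hrest r hr) hre
        exact le_of_lt this
      exact le_trans step1 step2



/-! ### Sorting infrastructure -/

lemma mergeSort_pairwise_le (κ : ℝ × ℝ × ℕ → ℝ) (X : List (ℝ × ℝ × ℕ)) :
    (X.mergeSort (fun p q => decide (κ p ≤ κ q))).Pairwise (fun p q => κ p ≤ κ q) := by
  have h := List.pairwise_mergeSort (le := fun p q => decide (κ p ≤ κ q))
    (fun a b c hab hbc =>
      decide_eq_true (le_trans (of_decide_eq_true hab) (of_decide_eq_true hbc)))
    (fun a b => by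
      rcases le_total (κ a) (κ b) with h | h
      · rw [Bool.or_eq_true]; exact Or.inl (decide_eq_true h)
      · rw [Bool.or_eq_true]; exact Or.inr (decide_eq_true h)) X
  exact h.imp (fun hab => of_decide_eq_true hab)

lemma pairwise_strict {X : List (ℝ × ℝ × ℕ)} {κ : ℝ × ℝ × ℕ → ℝ}
    (h1 : X.Pairwise fun p q => κ p ≤ κ q) (h2 : X.Nodup)
    (hinj : ∀ p ∈ X, ∀ q ∈ X, κ p = κ q → p = q) :
    X.Pairwise fun p q => κ p < κ q := by
  have h2' : X.Pairwise (fun p q => p ≠ q) := h2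
  exact (h1.and h2').imp_of_mem
    (fun {a b} ha hb h => lt_of_le_of_ne h.1 fun he => h.2 (hinj a ha b hb he))

lemma eq_of_perm_of_pairwise {κ : ℝ × ℝ × ℕ → ℝ} :
    ∀ (l1 l2 : List (ℝ × ℝ × ℕ)), l1.Perm l2 →
    l1.Pairwise (fun p q => κ p < κ q) → l2.Pairwise (fun p q => κ p < κ q) → l1 = l2 := by
  intro l1
  induction l1 with
  | nil =>
    intro l2 hperm _ _
    rw [(hperm.symm).eq_nil]
  | cons a t1 ih =>
    intro l2 hperm h1 h2
    cases l2 with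
    | nil =>
      have := hperm.eq_nil
      exact absurd this (by simp)
    | cons b t2 =>
      have hab : a = b := by
        have ha2 : a ∈ b :: t2 := hperm.mem_iff.mp (List.mem_cons_self)
        rcases List.mem_cons.mp ha2 with h | h
        · exact h
        · exfalso
          have hba : κ b < κ a := (List.pairwise_cons.mp h2).1 a h
          have hb1 : b ∈ a :: t1 := hperm.mem_iff.mpr (List.mem_cons_self)
          rcases List.mem_cons.mp hb1 with h' | h'
          · rw [h'] at hba; exact lt_irrefl _ hba
          · exact lt_asymm hba ((List.pairwise_cons.mp h1).1 b h')
      subst hab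
      rw [ih t2 hperm.cons_inv (List.pairwise_cons.mp h1).2 (List.pairwise_cons.mp h2).2]

lemma sublist_of_subset_sorted {κ : ℝ × ℝ × ℕ → ℝ} :
    ∀ (l2 l1 : List (ℝ × ℝ × ℕ)), l1.Pairwise (fun p q => κ p < κ q) →
    l2.Pairwise (fun p q => κ p < κ q) → (∀ a ∈ l1, a ∈ l2) → List.Sublist l1 l2 := by
  intro l2
  induction l2 with
  | nil =>
    intro l1 _ _ hss
    cases l1 with
    | nil => exact List.Sublist.refl _
    | cons a t1 => exact absurd (hss a (List.mem_cons_self)) List.not_mem_nil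
  | cons b t2 ih =>
    intro l1 h1 h2 hss
    cases l1 with
    | nil => exact List.nil_sublist _
    | cons a t1 =>
      by_cases hab : a = b
      · subst hab
        refine List.Sublist.cons₂ a (ih t1 (List.pairwise_cons.mp h1).2
          (List.pairwise_cons.mp h2).2 ?_)
        intro x hx
        have hxl2 : x ∈ a :: t2 := hss x (List.mem_cons_of_mem _ hx)
        rcases List.mem_cons.mp hxl2 with h | h
        · exfalso
          have := (List.pairwise_cons.mp h1).1 x hx
          rw [h] at this
          exact lt_irrefl _ this
        · exact h
      · have hat2 : a ∈ t2 := by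
          rcases List.mem_cons.mp (hss a (List.mem_cons_self)) with h | h
          · exact absurd h hab
          · exact h
        refine List.Sublist.cons b (ih (a :: t1) h1 (List.pairwise_cons.mp h2).2 ?_)
        intro x hx
        rcases List.mem_cons.mp (hss x hx) with h | h
        · exfalso
          have hba : κ b < κ a := (List.pairwise_cons.mp h2).1 a hat2
          rcases List.mem_cons.mp hx with h' | h'
          · rw [h'] at h; rw [h] at hba; exact lt_irrefl _ hba
          · have := (List.pairwise_cons.mp h1).1 x h'
            rw [h] at this
            exact lt_asymm hba this
        · exact h


/-- Comparison of the number of heaps when the hypograph of a non-decreasing function `f`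
is removed and the points above it fall down to the ground:
`R(ξ ∩ B_t) ≤ R(F(ξ ∩ B_t)) ≤ R(F(ξ) ∩ B_t)` for every `t ≥ 0`. -/
theorem falling_domain_comparison
    (f : ℝ → ℝ≥0∞) (hf : MonotoneOn f (Set.Icc (0 : ℝ) 1))
    (af : ℝ) (haf : af = sInf ({x ∈ Set.Icc (0 : ℝ) 1 | f x = ⊤} ∪ {1}))
    (F : ℝ × ℝ × ℕ → ℝ × ℝ × ℕ)
    (hF : ∀ p, F p = (p.1, p.2.1 - (f p.1).toReal, p.2.2))
    (ξ : Finset (ℝ × ℝ × ℕ))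
    (hmem : ∀ p ∈ ξ, p.1 ∈ Set.Ioo (0 : ℝ) af ∧ f p.1 < ENNReal.ofReal p.2.1 ∧ 1 ≤ p.2.2)
    (hinj1 : Set.InjOn (fun p : ℝ × ℝ × ℕ => p.1) ξ)
    (hinj2 : Set.InjOn (fun p : ℝ × ℝ × ℕ => p.2.1) ξ)
    (hinj2' : Set.InjOn (fun p : ℝ × ℝ × ℕ => p.2.1) (F '' ξ)) :
    ∀ t : ℝ, 0 ≤ t →
      Rtimed ((ξ.filter fun p => 0 ≤ p.2.1 ∧ p.2.1 ≤ t).toList)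
          ≤ Rtimed (((ξ.filter fun p => 0 ≤ p.2.1 ∧ p.2.1 ≤ t).toList).map F) ∧
        Rtimed (((ξ.filter fun p => 0 ≤ p.2.1 ∧ p.2.1 ≤ t).toList).map F)
          ≤ Rtimed ((ξ.toList.map F).filter fun p => decide (0 ≤ p.2.1 ∧ p.2.1 ≤ t)) := by
  intro t ht
  -- basic analytic facts
  have haf1 : af ≤ 1 := by
    rw [haf]
    refine csInf_le ⟨0, ?_⟩ (Set.mem_union_right _ rfl)
    rintro y (⟨⟨h0, h1⟩, -⟩ | rfl)
    · exact h0
    · exact zero_le_one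
  have hIcc : ∀ p ∈ ξ, p.1 ∈ Set.Icc (0 : ℝ) 1 := fun p hp =>
    ⟨le_of_lt (hmem p hp).1.1, le_trans (le_of_lt (hmem p hp).1.2) haf1⟩
  have hfin : ∀ p ∈ ξ, f p.1 ≠ ⊤ := fun p hp =>
    ((hmem p hp).2.1.trans ENNReal.ofReal_lt_top).ne
  have hτpos : ∀ p ∈ ξ, 0 < p.2.1 := by
    intro p hp
    have h1 : (0 : ℝ≥0∞) < ENNReal.ofReal p.2.1 :=
      lt_of_le_of_lt (by simp) (hmem p hp).2.1
    exact ENNReal.ofReal_pos.mp h1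
  have hfle : ∀ p ∈ ξ, (f p.1).toReal < p.2.1 := by
    intro p hp
    have h1 : (f p.1).toReal < (ENNReal.ofReal p.2.1).toReal :=
      (ENNReal.toReal_lt_toReal (hfin p hp) ENNReal.ofReal_ne_top).mpr (hmem p hp).2.1
    rwa [ENNReal.toReal_ofReal (le_of_lt (hτpos p hp))] at h1
  have hmono : ∀ p ∈ ξ, ∀ q ∈ ξ, p.1 ≤ q.1 → (f p.1).toReal ≤ (f q.1).toReal :=
    fun p hp q hq h =>
      (ENNReal.toReal_le_toReal (hfin p hp) (hfin q hq)).mpr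
        (hf (hIcc p hp) (hIcc q hq) h)
  have hgF : ∀ p, (F p).2.1 = p.2.1 - (f p.1).toReal := fun p => by rw [hF p]
  have hFfst : ∀ p, (F p).1 = p.1 := fun p => by rw [hF p]
  have hFsnd : ∀ p, (F p).2.2 = p.2.2 := fun p => by rw [hF p]
  have hπF : ∀ p, πP (F p) = πP p := fun p => by rw [hF p]; rfl
  have hFinj : ∀ p ∈ ξ, ∀ q ∈ ξ, F p = F q → p = q := by
    intro p hp q hq h
    have h1 : p.1 = q.1 := by rw [← hFfst p, ← hFfst q, h]
    exact hinj1 (Finset.mem_coe.mpr hp) (Finset.mem_coe.mpr hq) h1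
  have hInv : ∀ p ∈ ξ, ∀ q ∈ ξ, p.2.1 < q.2.1 →
      q.2.1 - (f q.1).toReal < p.2.1 - (f p.1).toReal → p.1 < q.1 := by
    intro p hp q hq h1 h2
    by_contra hc
    push_neg at hc
    have := hmono q hq p hp hc
    linarith
  -- the lists
  set L : List (ℝ × ℝ × ℕ) := (ξ.filter fun p => 0 ≤ p.2.1 ∧ p.2.1 ≤ t).toList with hLdef
  set M : List (ℝ × ℝ × ℕ) :=
    (ξ.toList.map F).filter fun p => decide (0 ≤ p.2.1 ∧ p.2.1 ≤ t) with hMdef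
  have hLmem : ∀ p, p ∈ L ↔ p ∈ ξ ∧ 0 ≤ p.2.1 ∧ p.2.1 ≤ t := by
    intro p
    rw [hLdef, Finset.mem_toList, Finset.mem_filter]
  have hMmem : ∀ a, a ∈ M ↔ (∃ q ∈ ξ, F q = a) ∧ 0 ≤ a.2.1 ∧ a.2.1 ≤ t := by
    intro a
    rw [hMdef, List.mem_filter]
    constructor
    · rintro ⟨h1, h2⟩
      obtain ⟨q, hq, rfl⟩ := List.mem_map.mp h1
      exact ⟨⟨q, Finset.mem_toList.mp hq, rfl⟩, of_decide_eq_true h2⟩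
    · rintro ⟨⟨q, hq, rfl⟩, h2⟩
      exact ⟨List.mem_map.mpr ⟨q, Finset.mem_toList.mpr hq, rfl⟩, decide_eq_true h2⟩
  have hNL : L.Nodup := hLdef ▸ Finset.nodup_toList _
  have hNLF : (L.map F).Nodup :=
    hNL.map_on fun p hp q hq h =>
      hFinj p ((hLmem p).mp hp).1 q ((hLmem q).mp hq).1 h
  have hNM : M.Nodup := by
    rw [hMdef]
    refine List.Nodup.filter _ ?_
    exact (Finset.nodup_toList ξ).map_on fun p hp q hq h =>
      hFinj p (Finset.mem_toList.mp hp) q (Finset.mem_toList.mp hq) h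
  -- time injectivity on F-images
  have htinjF : ∀ a, (∃ q ∈ ξ, F q = a) → ∀ b, (∃ q ∈ ξ, F q = b) →
      a.2.1 = b.2.1 → a = b := by
    rintro a ⟨p, hp, rfl⟩ b ⟨q, hq, rfl⟩ h
    exact hinj2' (Set.mem_image_of_mem F (Finset.mem_coe.mpr hp))
      (Set.mem_image_of_mem F (Finset.mem_coe.mpr hq)) h
  -- the sorted lists
  set l : List (ℝ × ℝ × ℕ) := L.mergeSort (fun p q => decide (p.2.1 ≤ q.2.1)) with hldef
  set l' : List (ℝ × ℝ × ℕ) :=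
    L.mergeSort (fun p q => decide (p.2.1 - (f p.1).toReal ≤ q.2.1 - (f q.1).toReal))
    with hl'def
  set l'' : List (ℝ × ℝ × ℕ) :=
    (L.map F).mergeSort (fun p q => decide (p.2.1 ≤ q.2.1)) with hl''def
  set l3 : List (ℝ × ℝ × ℕ) := M.mergeSort (fun p q => decide (p.2.1 ≤ q.2.1)) with hl3def
  have hlP : l.Perm L := by rw [hldef]; exact List.mergeSort_perm L _
  have hl'P : l'.Perm L := by rw [hl'def]; exact List.mergeSort_perm L _
  have hl''P : l''.Perm (L.map F) := by rw [hl''def]; exact List.mergeSort_perm _ _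
  have hl3P : l3.Perm M := by rw [hl3def]; exact List.mergeSort_perm M _
  have hl_strict : l.Pairwise fun p q => p.2.1 < q.2.1 := by
    refine pairwise_strict (κ := fun p => p.2.1) ?_ (hlP.symm.nodup hNL) ?_
    · rw [hldef]; exact mergeSort_pairwise_le (fun p => p.2.1) L
    · intro p hp q hq h
      have hp' := ((hLmem p).mp (hlP.mem_iff.mp hp)).1
      have hq' := ((hLmem q).mp (hlP.mem_iff.mp hq)).1
      exact hinj2 (Finset.mem_coe.mpr hp') (Finset.mem_coe.mpr hq') h
  have hginj : ∀ p ∈ L, ∀ q ∈ L, p.2.1 - (f p.1).toReal = q.2.1 - (f q.1).toReal →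
      p = q := by
    intro p hp q hq h
    have hp' := ((hLmem p).mp hp).1
    have hq' := ((hLmem q).mp hq).1
    have h2 : (F p).2.1 = (F q).2.1 := by rw [hgF p, hgF q]; exact h
    exact hFinj p hp' q hq'
      (hinj2' (Set.mem_image_of_mem F (Finset.mem_coe.mpr hp'))
        (Set.mem_image_of_mem F (Finset.mem_coe.mpr hq')) h2)
  have hl'_strict : l'.Pairwise fun p q =>
      p.2.1 - (f p.1).toReal < q.2.1 - (f q.1).toReal := by
    refine pairwise_strict (κ := fun p => p.2.1 - (f p.1).toReal) ?_
      (hl'P.symm.nodup hNL) ?_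
    · rw [hl'def]; exact mergeSort_pairwise_le (fun p => p.2.1 - (f p.1).toReal) L
    · intro p hp q hq h
      exact hginj p (hl'P.mem_iff.mp hp) q (hl'P.mem_iff.mp hq) h
  have himgLF : ∀ a ∈ L.map F, ∃ q ∈ ξ, F q = a := by
    intro a ha
    obtain ⟨p, hp, rfl⟩ := List.mem_map.mp ha
    exact ⟨p, ((hLmem p).mp hp).1, rfl⟩
  have hl''_strict : l''.Pairwise fun p q => p.2.1 < q.2.1 := by
    refine pairwise_strict (κ := fun p => p.2.1) ?_ (hl''P.symm.nodup hNLF) ?_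
    · rw [hl''def]; exact mergeSort_pairwise_le (fun p => p.2.1) (L.map F)
    · intro p hp q hq h
      exact htinjF p (himgLF p (hl''P.mem_iff.mp hp)) q (himgLF q (hl''P.mem_iff.mp hq)) h
  have hl3_strict : l3.Pairwise fun p q => p.2.1 < q.2.1 := by
    refine pairwise_strict (κ := fun p => p.2.1) ?_ (hl3P.symm.nodup hNM) ?_
    · rw [hl3def]; exact mergeSort_pairwise_le (fun p => p.2.1) M
    · intro p hp q hq h
      exact htinjF p ((hMmem p).mp (hl3P.mem_iff.mp hp)).1 q
        ((hMmem q).mp (hl3P.mem_iff.mp hq)).1 h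
  -- identification of l'' with l'.map F
  have hl'F_strict : (l'.map F).Pairwise fun p q => p.2.1 < q.2.1 := by
    rw [List.pairwise_map]
    refine hl'_strict.imp ?_
    intro a b hab
    rw [hgF a, hgF b]
    exact hab
  have heq1 : l'' = l'.map F :=
    eq_of_perm_of_pairwise (κ := fun p => p.2.1) l'' (l'.map F)
      (hl''P.trans (hl'P.map F).symm) hl''_strict hl'F_strict
  have hmapπ : (l'.map F).map πP = l'.map πP := by
    rw [List.map_map]
    exact List.map_congr_left fun p _ => hπF p
  -- Rtimed in terms of nroots
  have hRt1 : Rtimed L = nroots 0 (l.map πP) := by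
    rw [hldef]; exact R_eq_nroots _
  have hRt2 : Rtimed (L.map F) = nroots 0 (l''.map πP) := by
    rw [hl''def]; exact R_eq_nroots _
  have hRt3 : Rtimed M = nroots 0 (l3.map πP) := by
    rw [hl3def]; exact R_eq_nroots _
  constructor
  · -- first inequality
    have key1 : nroots 0 (l.map πP) ≤ nroots 0 (l'.map πP) := by
      refine master1 (fun p => p.2.1 - (f p.1).toReal) l' l 0
        (hlP.trans hl'P.symm) hl_strict hl'_strict ?_ ?_
      · intro p hp q hq h1 h2
        exact hInv p ((hLmem p).mp (hlP.mem_iff.mp hp)).1 q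
          ((hLmem q).mp (hlP.mem_iff.mp hq)).1 h1 h2
      · intro p hp
        exact (hmem p ((hLmem p).mp (hlP.mem_iff.mp hp)).1).2.2
    rw [hRt1, hRt2, heq1, hmapπ]
    exact key1
  · -- second inequality
    have hsubset : ∀ a ∈ l'', a ∈ l3 := by
      intro a ha
      have haLF : a ∈ L.map F := hl''P.mem_iff.mp ha
      obtain ⟨p, hp, rfl⟩ := List.mem_map.mp haLF
      have hpmem := (hLmem p).mp hp
      refine hl3P.mem_iff.mpr ((hMmem (F p)).mpr ⟨⟨p, hpmem.1, rfl⟩, ?_, ?_⟩)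
      · rw [hgF p]
        have := hfle p hpmem.1
        linarith
      · rw [hgF p]
        have h1 : (0:ℝ) ≤ (f p.1).toReal := ENNReal.toReal_nonneg
        have h2 := hpmem.2.2
        linarith
    have hsub : List.Sublist l'' l3 :=
      sublist_of_subset_sorted (κ := fun p => p.2.1) l3 l'' hl''_strict hl3_strict hsubset
    have hextras : ∀ e ∈ l3, e ∉ l'' → ∀ r ∈ l'', e.2.1 < r.2.1 → r.1 < e.1 := by
      intro e he hne r hr hlt
      obtain ⟨⟨pe, hpe, rfl⟩, he2⟩ := (hMmem e).mp (hl3P.mem_iff.mp he)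
      have hrLF : r ∈ L.map F := hl''P.mem_iff.mp hr
      obtain ⟨pr, hpr, rfl⟩ := List.mem_map.mp hrLF
      have hprmem := (hLmem pr).mp hpr
      have hpeL : pe ∉ L := by
        intro hcon
        exact hne (hl''P.mem_iff.mpr (List.mem_map.mpr ⟨pe, hcon, rfl⟩))
      have hpet : t < pe.2.1 := by
        by_contra hc
        push_neg at hc
        exact hpeL ((hLmem pe).mpr ⟨hpe, le_of_lt (hτpos pe hpe), hc⟩)
      rw [hFfst pe, hFfst pr]
      by_contra hc
      push_neg at hc
      have hmle := hmono pe hpe pr hprmem.1 hc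
      rw [hgF pe, hgF pr] at hlt
      have hprt := hprmem.2.2
      linarith
    have key2 : nroots 0 (l''.map πP) ≤ nroots 0 (l3.map πP) :=
      master2 l3.length l3 l'' 0 le_rfl hsub hl3_strict hextras
    rw [hRt2, hRt3] at *
    exact key2

end HeapPatience
end

section
/- For any finite sequence (u_i,ν_i)_{1≤i≤n} with pairwise distinct labels, the greedy heap patience sorting algorithm is optimal: R((u_i,ν_i)_{1≤i≤n}) equals the minimum of #{i : p(i) = 0} over all parent maps p : {1,…,n} → {0,1,…,n} satisfying p(i) < i for every i, u_{p(i)} < u_i whenever p(i) ≥ 1, and #{i : p(i) = j} ≤ ν_j for every j ∈ {1,…,n}. In other words, no way of inserting the items in order into heap-ordered trees with the given degree constraints uses fewer trees than the greedy algorithm. -/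
open MeasureTheory ProbabilityTheory Filter Topology
open scoped ENNReal NNReal

namespace HeapPatience

/-- capacity below threshold `t` -/
noncomputable def C (s : List (ℝ × ℕ)) (t : ℝ) : ℕ :=
  (s.map fun p => if p.1 < t then p.2 else 0).sum

lemma C_nil (t : ℝ) : C [] t = 0 := rfl

lemma C_cons (a : ℝ × ℕ) (s : List (ℝ × ℕ)) (t : ℝ) :
    C (a :: s) t = (if a.1 < t then a.2 else 0) + C s t := by
  simp [C]

lemma C_le_of {s : List (ℝ × ℕ)} {x t : ℝ}
    (h : ∀ p ∈ s, p.1 < x → 0 < p.2 → p.1 < t) : C s x ≤ C s t := by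
  induction s with
  | nil => simp [C]
  | cons a s ih =>
    rw [C_cons, C_cons]
    have h2 : C s x ≤ C s t := ih fun p hp => h p (List.mem_cons_of_mem _ hp)
    have h1 : (if a.1 < x then a.2 else 0) ≤ (if a.1 < t then a.2 else 0) := by
      split_ifs with h3 h4
      · rfl
      · rcases Nat.eq_zero_or_pos a.2 with h5 | h5
        · omega
        · exact absurd (h a (List.mem_cons_self) h3 h5) h4
      · omega
      · rfl
    omega

lemma C_mono {t t' : ℝ} (h : t ≤ t') (s : List (ℝ × ℕ)) : C s t ≤ C s t' :=
  C_le_of fun p _ hp _ => lt_of_lt_of_le hp h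

lemma C_eq_zero {s : List (ℝ × ℕ)} {x : ℝ} (h : ∀ p ∈ s, p.1 < x → p.2 = 0) :
    C s x = 0 := by
  induction s with
  | nil => rfl
  | cons a s ih =>
    rw [C_cons, ih fun p hp => h p (List.mem_cons_of_mem _ hp)]
    have := h a (List.mem_cons_self)
    split_ifs with h1
    · simp [this h1]
    · rfl

lemma decrementAt_C {s : List (ℝ × ℕ)} {y : ℝ} (t : ℝ)
    (h : ∃ p ∈ s, p.1 = y ∧ 0 < p.2) :
    C (decrementAt s y) t + (if y < t then 1 else 0) = C s t := by
  induction s with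
  | nil => simp at h
  | cons a s ih =>
    by_cases ha : a.1 = y ∧ 0 < a.2
    · rw [decrementAt]
      rw [if_pos ha, C_cons, C_cons]
      rcases ha with ⟨ha1, ha2⟩
      subst ha1
      split_ifs <;> omega
    · rw [decrementAt, if_neg ha, C_cons, C_cons]
      have h' : ∃ p ∈ s, p.1 = y ∧ 0 < p.2 := by
        rcases h with ⟨p, hp, h1, h2⟩
        rcases List.mem_cons.mp hp with rfl | hp
        · exact absurd ⟨h1, h2⟩ ha
        · exact ⟨p, hp, h1, h2⟩
      have := ih h'
      omega


lemma step_none {s : List (ℝ × ℕ)} {r : ℕ} {x : ℝ × ℕ}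
    (h : (s.filter fun p => decide (0 < p.2 ∧ p.1 < x.1)).argmax Prod.fst = none) :
    step (s, r) x = (x :: s, r + 1) := by
  simp only [step, h]

lemma step_some {s : List (ℝ × ℕ)} {r : ℕ} {x q : ℝ × ℕ}
    (h : (s.filter fun p => decide (0 < p.2 ∧ p.1 < x.1)).argmax Prod.fst = some q) :
    step (s, r) x = (x :: decrementAt s q.1, r) := by
  simp only [step, h]

lemma argmax_none_iff {s : List (ℝ × ℕ)} {x : ℝ × ℕ}
    (h : (s.filter fun p => decide (0 < p.2 ∧ p.1 < x.1)).argmax Prod.fst = none) :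
    ∀ p ∈ s, p.1 < x.1 → p.2 = 0 := by
  rw [List.argmax_eq_none] at h
  intro p hp hpx
  by_contra hne
  have : p ∈ s.filter fun p => decide (0 < p.2 ∧ p.1 < x.1) := by
    rw [List.mem_filter]
    exact ⟨hp, by simp [hpx, Nat.pos_of_ne_zero hne]⟩
  rw [h] at this
  simp at this

lemma argmax_some_mem {s : List (ℝ × ℕ)} {x q : ℝ × ℕ}
    (h : (s.filter fun p => decide (0 < p.2 ∧ p.1 < x.1)).argmax Prod.fst = some q) :
    q ∈ s ∧ 0 < q.2 ∧ q.1 < x.1 := by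
  have := List.argmax_mem h
  rw [List.mem_filter] at this
  refine ⟨this.1, ?_⟩
  have := this.2
  simpa using this

lemma argmax_some_max {s : List (ℝ × ℕ)} {x q : ℝ × ℕ}
    (h : (s.filter fun p => decide (0 < p.2 ∧ p.1 < x.1)).argmax Prod.fst = some q) :
    ∀ p ∈ s, 0 < p.2 → p.1 < x.1 → p.1 ≤ q.1 := by
  intro p hp h1 h2
  exact List.le_of_mem_argmax (by rw [List.mem_filter]; exact ⟨hp, by simp [h1, h2]⟩) h

lemma run_take_succ (l : List (ℝ × ℕ)) (k : ℕ) (hk : k < l.length) :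
    run (l.take (k + 1)) = step (run (l.take k)) (l.get ⟨k, hk⟩) := by
  rw [run, run, List.take_succ, List.foldl_append]
  rw [List.getElem?_eq_getElem hk]
  simp


lemma take_finRange_succ {n k : ℕ} (hk : k < n) :
    (List.finRange n).take (k + 1) = (List.finRange n).take k ++ [⟨k, hk⟩] := by
  rw [List.take_succ]
  congr 1
  rw [List.getElem?_eq_getElem (by simpa using hk)]
  simp

lemma mem_take_finRange {n k : ℕ} (i : Fin n) :
    i ∈ (List.finRange n).take k ↔ i.val < k := by
  induction k with
  | zero => simp
  | succ k ih =>
    by_cases hk : k < n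
    · rw [take_finRange_succ hk, List.mem_append, ih]
      simp only [List.mem_singleton]
      constructor
      · rintro (h | h)
        · omega
        · subst h; simp
      · intro h
        by_cases h2 : i.val < k
        · exact Or.inl h2
        · right; apply Fin.ext; simp only [Fin.val_mk]; omega
    · have h1 : (List.finRange n).take (k+1) = List.finRange n := by
        apply List.take_of_length_le; simp; omega
      have h2 : (List.finRange n).take k = List.finRange n := by
        apply List.take_of_length_le; simp; omega
      rw [h1]
      rw [h2] at ih
      simp only [List.mem_finRange, true_iff] at ih ⊢
      omega

lemma decrementAt_map {n : ℕ} {u : Fin n → ℝ} (huinj : Function.Injective u)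
    (w : Fin n → ℕ) (l : List (Fin n)) (hl : l.Nodup) (j : Fin n) (hj : j ∈ l)
    (hw : 0 < w j) :
    decrementAt (l.map fun i => (u i, w i)) (u j) =
      l.map fun i => (u i, if i = j then w j - 1 else w i) := by
  induction l with
  | nil => simp at hj
  | cons a l ih =>
    rw [List.map_cons, List.map_cons, decrementAt]
    by_cases ha : a = j
    · subst ha
      rw [if_pos ⟨rfl, hw⟩]
      have hnj : a ∉ l := (List.nodup_cons.mp hl).1
      congr 1
      · simp
      · apply List.map_congr_left
        intro i hi
        have : i ≠ a := fun h => hnj (h ▸ hi)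
        simp [this]
    · have hne : u a ≠ u j := fun h => ha (huinj h)
      rw [if_neg (by simp [hne])]
      have hj' : j ∈ l := by
        rcases List.mem_cons.mp hj with h | h
        · exact absurd h.symm ha
        · exact h
      rw [ih (List.nodup_cons.mp hl).2 hj']
      simp [ha]

lemma C_map {n : ℕ} (u : Fin n → ℝ) (w : Fin n → ℕ) (l : List (Fin n)) (t : ℝ) :
    C (l.map fun i => (u i, w i)) t = (l.map fun i => if u i < t then w i else 0).sum := by
  induction l with
  | nil => rfl
  | cons a l ih => rw [List.map_cons, C_cons, List.map_cons, List.sum_cons, ih]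

lemma card_split {n : ℕ} (P : Fin n → Prop) [DecidablePred P] {k : ℕ} (hk : k < n) :
    (Finset.univ.filter fun i : Fin n => P i ∧ i.val < k + 1).card =
      (Finset.univ.filter fun i : Fin n => P i ∧ i.val < k).card +
        (if P ⟨k, hk⟩ then 1 else 0) := by
  split_ifs with hP
  · have : (Finset.univ.filter fun i : Fin n => P i ∧ i.val < k + 1) =
        insert ⟨k, hk⟩ (Finset.univ.filter fun i : Fin n => P i ∧ i.val < k) := by
      ext i
      simp only [Finset.mem_filter, Finset.mem_insert, Finset.mem_univ, true_and]
      constructor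
      · rintro ⟨hPi, hik⟩
        by_cases h : i.val = k
        · left; exact Fin.ext (by simpa using h)
        · right; exact ⟨hPi, by omega⟩
      · rintro (rfl | ⟨hPi, hik⟩)
        · exact ⟨hP, by simp⟩
        · exact ⟨hPi, by omega⟩
    rw [this, Finset.card_insert_of_notMem (by simp)]
  · have : (Finset.univ.filter fun i : Fin n => P i ∧ i.val < k + 1) =
        (Finset.univ.filter fun i : Fin n => P i ∧ i.val < k) := by
      ext i
      simp only [Finset.mem_filter, Finset.mem_univ, true_and]
      constructor
      · rintro ⟨hPi, hik⟩
        refine ⟨hPi, ?_⟩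
        by_cases h : i.val = k
        · exact absurd ((show i = ⟨k, hk⟩ from Fin.ext (by simpa using h)) ▸ hPi) hP
        · omega
      · rintro ⟨hPi, hik⟩; exact ⟨hPi, by omega⟩
    rw [this]
    omega


lemma keyA {n : ℕ} (u : Fin n → ℝ) (ν : Fin n → ℕ) {k : ℕ} (hk : k < n)
    (cnt1 cnt2 : Fin n → ℕ) (hcntK : cnt2 ⟨k, hk⟩ = 0)
    (hsame : ∀ j : Fin n, j.val < k → cnt2 j = cnt1 j) (t : ℝ) :
    (∑ j : Fin n, if j.val < k + 1 ∧ u j < t then ν j - cnt2 j else 0) =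
      (∑ j : Fin n, if j.val < k ∧ u j < t then ν j - cnt1 j else 0) +
        (if u ⟨k, hk⟩ < t then ν ⟨k, hk⟩ else 0) := by
  classical
  have key : ∀ j : Fin n,
      (if j.val < k + 1 ∧ u j < t then ν j - cnt2 j else 0) =
      (if j.val < k ∧ u j < t then ν j - cnt1 j else 0) +
        (if j = ⟨k, hk⟩ then (if u ⟨k, hk⟩ < t then ν ⟨k, hk⟩ else 0) else 0) := by
    intro j
    by_cases hj : j = (⟨k, hk⟩ : Fin n)
    · have hjv : (j : ℕ) = k := by rw [hj]
      have hc2 : cnt2 j = 0 := by rw [hj]; exact hcntK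
      rw [if_pos hj, if_neg (show ¬((j : ℕ) < k ∧ u j < t) from fun h => by omega)]
      by_cases ht : u (⟨k, hk⟩ : Fin n) < t
      · have ht' : u j < t := by rw [hj]; exact ht
        rw [if_pos (show (j : ℕ) < k + 1 ∧ u j < t from ⟨by omega, ht'⟩),
          if_pos ht, hc2, hj]
        omega
      · have ht' : ¬ u j < t := by rw [hj]; exact ht
        rw [if_neg (show ¬((j : ℕ) < k + 1 ∧ u j < t) from fun h => ht' h.2),
          if_neg ht]
    · have hjv : (j : ℕ) ≠ k := fun h => hj (Fin.ext h)
      rw [if_neg hj]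
      by_cases h1 : (j : ℕ) < k ∧ u j < t
      · rw [if_pos (show (j : ℕ) < k + 1 ∧ u j < t from ⟨by omega, h1.2⟩),
          if_pos h1, hsame j h1.1]
        omega
      · rw [if_neg (show ¬((j : ℕ) < k + 1 ∧ u j < t) from
            fun h => h1 ⟨by omega, h.2⟩), if_neg h1]
  rw [Finset.sum_congr rfl fun j _ => key j, Finset.sum_add_distrib,
    Finset.sum_ite_eq' Finset.univ (⟨k, hk⟩ : Fin n)
      fun _ => (if u ⟨k, hk⟩ < t then ν ⟨k, hk⟩ else 0)]
  simp

lemma keyB {n : ℕ} (u : Fin n → ℝ) (ν : Fin n → ℕ) {k : ℕ} (hk : k < n)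
    (cnt1 cnt2 : Fin n → ℕ) (hcntK : cnt2 ⟨k, hk⟩ = 0) (j₀ : Fin n)
    (hj₀v : j₀.val < k) (hj₀cnt : cnt2 j₀ = cnt1 j₀ + 1) (hj₀lt : cnt1 j₀ < ν j₀)
    (hsame : ∀ j : Fin n, j ≠ j₀ → cnt2 j = cnt1 j) (t : ℝ) :
    (∑ j : Fin n, if j.val < k + 1 ∧ u j < t then ν j - cnt2 j else 0) +
        (if u j₀ < t then 1 else 0) =
      (∑ j : Fin n, if j.val < k ∧ u j < t then ν j - cnt1 j else 0) +
        (if u ⟨k, hk⟩ < t then ν ⟨k, hk⟩ else 0) := by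
  classical
  have key : ∀ j : Fin n,
      ((if j.val < k + 1 ∧ u j < t then ν j - cnt2 j else 0) +
        (if j = j₀ then (if u j₀ < t then 1 else 0) else 0)) =
      ((if j.val < k ∧ u j < t then ν j - cnt1 j else 0) +
        (if j = ⟨k, hk⟩ then (if u ⟨k, hk⟩ < t then ν ⟨k, hk⟩ else 0) else 0)) := by
    intro j
    by_cases hj : j = (⟨k, hk⟩ : Fin n)
    · have hjv : (j : ℕ) = k := by rw [hj]
      have hjj₀ : j ≠ j₀ := by
        intro h; rw [← h] at hj₀v; omega
      have hc2 : cnt2 j = 0 := by rw [hj]; exact hcntK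
      rw [if_neg hjj₀, if_pos hj,
        if_neg (show ¬((j : ℕ) < k ∧ u j < t) from fun h => by omega)]
      by_cases ht : u (⟨k, hk⟩ : Fin n) < t
      · have ht' : u j < t := by rw [hj]; exact ht
        rw [if_pos (show (j : ℕ) < k + 1 ∧ u j < t from ⟨by omega, ht'⟩),
          if_pos ht, hc2, hj]
        omega
      · have ht' : ¬ u j < t := by rw [hj]; exact ht
        rw [if_neg (show ¬((j : ℕ) < k + 1 ∧ u j < t) from fun h => ht' h.2),
          if_neg ht]
    · have hjv : (j : ℕ) ≠ k := fun h => hj (Fin.ext h)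
      rw [if_neg hj]
      by_cases hjj : j = j₀
      · have hjv₀ : (j : ℕ) < k := by rw [hjj]; exact hj₀v
        have hc2 : cnt2 j = cnt1 j + 1 := by rw [hjj]; exact hj₀cnt
        have hlt : cnt1 j < ν j := by rw [hjj]; exact hj₀lt
        rw [if_pos hjj, hc2]
        by_cases ht : u j₀ < t
        · have ht' : u j < t := by rw [hjj]; exact ht
          rw [if_pos ht,
            if_pos (show (j : ℕ) < k + 1 ∧ u j < t from ⟨by omega, ht'⟩),
            if_pos (show (j : ℕ) < k ∧ u j < t from ⟨hjv₀, ht'⟩)]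
          omega
        · have ht' : ¬ u j < t := by rw [hjj]; exact ht
          rw [if_neg ht,
            if_neg (show ¬((j : ℕ) < k + 1 ∧ u j < t) from fun h => ht' h.2),
            if_neg (show ¬((j : ℕ) < k ∧ u j < t) from fun h => ht' h.2)]
      · rw [if_neg hjj, hsame j hjj]
        by_cases h1 : (j : ℕ) < k ∧ u j < t
        · rw [if_pos (show (j : ℕ) < k + 1 ∧ u j < t from ⟨by omega, h1.2⟩),
            if_pos h1]
        · rw [if_neg (show ¬((j : ℕ) < k + 1 ∧ u j < t) from
              fun h => h1 ⟨by omega, h.2⟩), if_neg h1]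
  have hs := Finset.sum_congr rfl fun j (_ : j ∈ Finset.univ) => key j
  rw [Finset.sum_add_distrib, Finset.sum_add_distrib,
    Finset.sum_ite_eq' Finset.univ j₀ (fun _ => (if u j₀ < t then 1 else 0)),
    Finset.sum_ite_eq' Finset.univ (⟨k, hk⟩ : Fin n)
      (fun _ => (if u ⟨k, hk⟩ < t then ν ⟨k, hk⟩ else 0))] at hs
  simpa using hs

lemma keyC {n : ℕ} (u : Fin n → ℝ) (ν : Fin n → ℕ) {k : ℕ}
    (cnt1 : Fin n → ℕ) (j₀ : Fin n) (hj₀v : j₀.val < k) {x t : ℝ}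
    (hj₀u : u j₀ < x) (hj₀lt : cnt1 j₀ < ν j₀) (ht : t ≤ u j₀) :
    (∑ j : Fin n, if j.val < k ∧ u j < t then ν j - cnt1 j else 0) + 1 ≤
      ∑ j : Fin n, if j.val < k ∧ u j < x then ν j - cnt1 j else 0 := by
  classical
  have key : ∀ j : Fin n,
      (if j.val < k ∧ u j < t then ν j - cnt1 j else 0) +
        (if j = j₀ then 1 else 0) ≤
      (if j.val < k ∧ u j < x then ν j - cnt1 j else 0) := by
    intro j
    by_cases hj : j = j₀
    · have h1 : ¬((j : ℕ) < k ∧ u j < t) := by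
        rintro ⟨-, h⟩; rw [hj] at h; linarith
      have h2 : (j : ℕ) < k ∧ u j < x := by
        constructor
        · rw [hj]; exact hj₀v
        · rw [hj]; exact hj₀u
      have h3 : cnt1 j < ν j := by rw [hj]; exact hj₀lt
      rw [if_pos hj, if_neg h1, if_pos h2]
      omega
    · rw [if_neg hj]
      have htx : t ≤ x := le_trans ht (le_of_lt hj₀u)
      by_cases h1 : (j : ℕ) < k ∧ u j < t
      · rw [if_pos h1, if_pos ⟨h1.1, lt_of_lt_of_le h1.2 htx⟩]
        omega
      · rw [if_neg h1]
        omega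
  have hs := Finset.sum_le_sum fun j (_ : j ∈ Finset.univ) => key j
  rw [Finset.sum_add_distrib,
    Finset.sum_ite_eq' Finset.univ j₀ (fun _ => (1 : ℕ))] at hs
  simpa using hs

lemma lower_bound {n : ℕ} (u : Fin n → ℝ) (ν : Fin n → ℕ)
    (p : Fin n → Option (Fin n))
    (hp1 : ∀ i j, p i = some j → j < i ∧ u j < u i)
    (hp2 : ∀ j, (Finset.univ.filter fun i => p i = some j).card ≤ ν j) :
    R ((List.finRange n).map fun i => (u i, ν i)) ≤
      (Finset.univ.filter fun i => p i = none).card := by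
  classical
  set items : List (ℝ × ℕ) := (List.finRange n).map fun i => (u i, ν i) with hitems
  have hlen : items.length = n := by simp [hitems]
  set cnt : ℕ → Fin n → ℕ := fun k j =>
    (Finset.univ.filter fun i : Fin n => p i = some j ∧ i.val < k).card with hcntdef
  set rp : ℕ → ℕ := fun k =>
    (Finset.univ.filter fun i : Fin n => p i = none ∧ i.val < k).card with hrpdef
  set g : ℕ → List (ℝ × ℕ) × ℕ := fun k => run (items.take k) with hgdef
  have hcle : ∀ k j, cnt k j ≤ ν j := by
    intro k j
    refine le_trans (Finset.card_le_card ?_) (hp2 j)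
    intro i hi
    simp only [hcntdef, Finset.mem_filter] at hi ⊢
    exact ⟨hi.1, hi.2.1⟩
  have main : ∀ k, k ≤ n →
      (g k).2 ≤ rp k ∧ ∀ t,
        (∑ j : Fin n, if j.val < k ∧ u j < t then ν j - cnt k j else 0) + (g k).2 ≤
          C (g k).1 t + rp k := by
    intro k
    induction k with
    | zero =>
      intro _
      have hg0 : g 0 = ([], 0) := by simp [hgdef, run]
      rw [hg0]
      refine ⟨Nat.zero_le _, fun t => ?_⟩
      simp
    | succ k ihk =>
      intro hk1
      have hk : k < n := hk1
      obtain ⟨ih1, ih2⟩ := ihk (le_of_lt hk)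
      have hgetk : items.get ⟨k, by omega⟩ = (u ⟨k, hk⟩, ν ⟨k, hk⟩) := by
        simp [hitems, List.get_eq_getElem]
      have hstep : g (k + 1) = step (g k) (u ⟨k, hk⟩, ν ⟨k, hk⟩) := by
        rw [hgdef]
        simp only
        rw [run_take_succ items k (by omega), hgetk]
      have hrp : rp (k + 1) = rp k + (if p ⟨k, hk⟩ = none then 1 else 0) :=
        card_split (fun i => p i = none) hk
      have hcnt : ∀ j, cnt (k + 1) j = cnt k j + (if p ⟨k, hk⟩ = some j then 1 else 0) :=
        fun j => card_split (fun i => p i = some j) hk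
      have hcntK : cnt (k + 1) ⟨k, hk⟩ = 0 := by
        rw [hcntdef]
        simp only
        rw [Finset.card_eq_zero, Finset.filter_eq_empty_iff]
        intro i _
        rintro ⟨hi1, hi2⟩
        have := (hp1 i ⟨k, hk⟩ hi1).1
        rw [Fin.lt_def] at this
        simp only [Fin.val_mk] at this
        omega
      rcases hmatch : ((g k).1.filter fun q =>
          decide (0 < q.2 ∧ q.1 < (u ⟨k, hk⟩, ν ⟨k, hk⟩).1)).argmax Prod.fst with _ | q
      · -- greedy creates a root
        have hg' : g (k + 1) = ((u ⟨k, hk⟩, ν ⟨k, hk⟩) :: (g k).1, (g k).2 + 1) := by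
          rw [hstep, ← step_none hmatch]
        have hC0 : C (g k).1 (u ⟨k, hk⟩) = 0 := by
          refine C_eq_zero ?_
          have := argmax_none_iff hmatch
          exact fun r hr h => this r hr h
        rcases hpk : p ⟨k, hk⟩ with _ | j₀
        · -- both root
          have hsame : ∀ j : Fin n, j.val < k → cnt (k + 1) j = cnt k j := by
            intro j _
            rw [hcnt j, hpk]
            simp
          have hCp' := keyA u ν hk (cnt k) (cnt (k + 1)) hcntK hsame
          have hrp' : rp (k + 1) = rp k + 1 := by rw [hrp, hpk]; simp
          constructor
          · rw [hg']
            omega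
          · intro t
            rw [hg', hCp' t]
            simp only [C_cons]
            have := ih2 t
            omega
        · -- greedy roots, p attaches to j₀
          obtain ⟨hj₀lt, hj₀u⟩ := hp1 ⟨k, hk⟩ j₀ hpk
          have hj₀v : j₀.val < k := by
            rw [Fin.lt_def] at hj₀lt
            simpa using hj₀lt
          have hj₀cnt : cnt (k + 1) j₀ = cnt k j₀ + 1 := by
            rw [hcnt j₀, hpk, if_pos rfl]
          have hcltν : cnt k j₀ < ν j₀ := by
            have := hcle (k + 1) j₀
            omega
          have hsame : ∀ j : Fin n, j ≠ j₀ → cnt (k + 1) j = cnt k j := by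
            intro j hj
            rw [hcnt j, hpk, if_neg (by simpa using fun h => hj h.symm)]
            omega
          have hCp' := keyB u ν hk (cnt k) (cnt (k + 1)) hcntK j₀ hj₀v hj₀cnt hcltν hsame
          have hres : ∀ t, t ≤ u j₀ →
              (∑ j : Fin n, if j.val < k ∧ u j < t then ν j - cnt k j else 0) + 1 ≤
                ∑ j : Fin n, if j.val < k ∧ u j < u ⟨k, hk⟩ then ν j - cnt k j else 0 :=
            fun t ht => keyC u ν (cnt k) j₀ hj₀v hj₀u hcltν ht
          have h1 : (g k).2 + 1 ≤ rp k := by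
            have h2 := ih2 (u ⟨k, hk⟩)
            have h3 := hres (u j₀) le_rfl
            rw [hC0] at h2
            omega
          have hrp' : rp (k + 1) = rp k := by rw [hrp, hpk]; simp
          constructor
          · rw [hg']
            omega
          · intro t
            rw [hg']
            simp only [C_cons]
            have h2 := hCp' t
            by_cases hbt : u j₀ < t
            · rw [if_pos hbt] at h2
              have := ih2 t
              omega
            · rw [if_neg hbt] at h2
              have h3 := hres t (le_of_not_gt hbt)
              have h4 := ih2 (u ⟨k, hk⟩)
              rw [hC0] at h4
              have h5 : ¬ u ⟨k, hk⟩ < t := by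
                intro h; exact hbt (lt_trans hj₀u h)
              rw [if_neg h5] at h2 ⊢
              omega
      · -- greedy attaches to q
        have hg' : g (k + 1) =
            ((u ⟨k, hk⟩, ν ⟨k, hk⟩) :: decrementAt (g k).1 q.1, (g k).2) := by
          rw [hstep, ← step_some hmatch]
        obtain ⟨hqmem, hqpos, hqlt⟩ := argmax_some_mem hmatch
        have hqmax := argmax_some_max hmatch
        have hdec : ∀ t, C (decrementAt (g k).1 q.1) t + (if q.1 < t then 1 else 0) =
            C (g k).1 t := fun t => decrementAt_C t ⟨q, hqmem, rfl, hqpos⟩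
        have hgm : ∀ t, q.1 < t → C (g k).1 (u ⟨k, hk⟩) ≤ C (g k).1 t := by
          intro t hqt
          exact C_le_of fun r hr h1 h2 => lt_of_le_of_lt (hqmax r hr h2 h1) hqt
        rcases hpk : p ⟨k, hk⟩ with _ | j₀
        · -- greedy attaches, p roots
          have hsame : ∀ j : Fin n, j.val < k → cnt (k + 1) j = cnt k j := by
            intro j _
            rw [hcnt j, hpk]
            simp
          have hCp' := keyA u ν hk (cnt k) (cnt (k + 1)) hcntK hsame
          have hrp' : rp (k + 1) = rp k + 1 := by rw [hrp, hpk]; simp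
          constructor
          · rw [hg']
            omega
          · intro t
            rw [hg', hCp' t]
            simp only [C_cons]
            have h1 := hdec t
            have h2 := ih2 t
            have h3 : (if q.1 < t then 1 else 0) ≤ 1 := by split_ifs <;> omega
            omega
        · -- both attach
          obtain ⟨hj₀lt, hj₀u⟩ := hp1 ⟨k, hk⟩ j₀ hpk
          have hj₀v : j₀.val < k := by
            rw [Fin.lt_def] at hj₀lt
            simpa using hj₀lt
          have hj₀cnt : cnt (k + 1) j₀ = cnt k j₀ + 1 := by
            rw [hcnt j₀, hpk, if_pos rfl]
          have hcltν : cnt k j₀ < ν j₀ := by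
            have := hcle (k + 1) j₀
            omega
          have hsame : ∀ j : Fin n, j ≠ j₀ → cnt (k + 1) j = cnt k j := by
            intro j hj
            rw [hcnt j, hpk, if_neg (by simpa using fun h => hj h.symm)]
            omega
          have hCp' := keyB u ν hk (cnt k) (cnt (k + 1)) hcntK j₀ hj₀v hj₀cnt hcltν hsame
          have hres : ∀ t, t ≤ u j₀ →
              (∑ j : Fin n, if j.val < k ∧ u j < t then ν j - cnt k j else 0) + 1 ≤
                ∑ j : Fin n, if j.val < k ∧ u j < u ⟨k, hk⟩ then ν j - cnt k j else 0 :=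
            fun t ht => keyC u ν (cnt k) j₀ hj₀v hj₀u hcltν ht
          have hrp' : rp (k + 1) = rp k := by rw [hrp, hpk]; simp
          constructor
          · rw [hg']
            omega
          · intro t
            rw [hg']
            simp only [C_cons]
            have h1 := hdec t
            have h2 := hCp' t
            by_cases hbt : u j₀ < t
            · rw [if_pos hbt] at h2
              have h3 : (if q.1 < t then 1 else 0) ≤ 1 := by split_ifs <;> omega
              have := ih2 t
              omega
            · rw [if_neg hbt] at h2
              have h6 : ¬ u ⟨k, hk⟩ < t := fun h => hbt (lt_trans hj₀u h)
              rw [if_neg h6] at h2 ⊢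
              by_cases hat : q.1 < t
              · rw [if_pos hat] at h1
                have h3 := hres t (le_of_not_gt hbt)
                have h4 := ih2 (u ⟨k, hk⟩)
                have h5 := hgm t hat
                omega
              · rw [if_neg hat] at h1
                have := ih2 t
                omega
  obtain ⟨h1, -⟩ := main n le_rfl
  have htn : items.take n = items := by rw [← hlen]; exact List.take_length
  have hgn : (g n).2 = R items := by rw [hgdef]; simp only [htn]; rfl
  have hrpn : rp n = (Finset.univ.filter fun i => p i = none).card := by
    rw [hrpdef]
    refine congrArg Finset.card ?_
    ext i
    simp [i.isLt]
  rw [← hgn, ← hrpn]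
  exact h1


lemma filter_update {n : ℕ} (p : Fin n → Option (Fin n)) (a : Fin n)
    (v : Option (Fin n)) (hpa : p a = none) (j : Fin n) :
    (Finset.univ.filter fun i => Function.update p a v i = some j) =
      if v = some j then insert a (Finset.univ.filter fun i => p i = some j)
      else (Finset.univ.filter fun i => p i = some j) := by
  split_ifs with hv
  · ext i
    simp only [Finset.mem_filter, Finset.mem_insert, Finset.mem_univ, true_and,
      Function.update_apply]
    by_cases hia : i = a
    · simp [hia, hv]
    · simp [hia]
  · ext i
    simp only [Finset.mem_filter, Finset.mem_univ, true_and, Function.update_apply]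
    by_cases hia : i = a
    · simp [hia, hv, hpa]
    · simp [hia]

lemma cnt_update_card {n : ℕ} (p : Fin n → Option (Fin n)) (a : Fin n)
    (v : Option (Fin n)) (hpa : p a = none) (j : Fin n) :
    (Finset.univ.filter fun i => Function.update p a v i = some j).card =
      (Finset.univ.filter fun i => p i = some j).card +
        (if v = some j then 1 else 0) := by
  rw [filter_update p a v hpa j]
  split_ifs with hv
  · rw [Finset.card_insert_of_notMem (by simp [hpa])]
  · rfl

lemma greedy_mem {n : ℕ} (u : Fin n → ℝ) (huinj : Function.Injective u) (ν : Fin n → ℕ) :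
    ∃ p : Fin n → Option (Fin n),
      (∀ i j, p i = some j → j < i ∧ u j < u i) ∧
      (∀ j, (Finset.univ.filter fun i => p i = some j).card ≤ ν j) ∧
      R ((List.finRange n).map fun i => (u i, ν i)) =
        (Finset.univ.filter fun i => p i = none).card := by
  classical
  set items : List (ℝ × ℕ) := (List.finRange n).map fun i => (u i, ν i) with hitems
  have hlen : items.length = n := by simp [hitems]
  set g : ℕ → List (ℝ × ℕ) × ℕ := fun k => run (items.take k) with hgdef
  have main : ∀ k, k ≤ n → ∃ p : Fin n → Option (Fin n),
      (∀ i j, p i = some j → j < i ∧ u j < u i) ∧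
      (∀ i : Fin n, k ≤ i.val → p i = none) ∧
      (∀ j, (Finset.univ.filter fun i => p i = some j).card ≤ ν j) ∧
      ((g k).2 = (Finset.univ.filter fun i => p i = none ∧ i.val < k).card) ∧
      ((g k).1 = ((List.finRange n).take k).reverse.map fun i =>
        (u i, ν i - (Finset.univ.filter fun i' => p i' = some i).card)) := by
    intro k
    induction k with
    | zero =>
      intro _
      refine ⟨fun _ => none, by simp, by simp, by simp, ?_, ?_⟩
      · simp [hgdef, run]
      · simp [hgdef, run]
    | succ k ihk =>
      intro hk1
      have hk : k < n := hk1
      obtain ⟨p, h1, h2, h3, h4, h5⟩ := ihk (le_of_lt hk)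
      have hgetk : items.get ⟨k, by omega⟩ = (u ⟨k, hk⟩, ν ⟨k, hk⟩) := by
        simp [hitems, List.get_eq_getElem]
      have hstep : g (k + 1) = step (g k) (u ⟨k, hk⟩, ν ⟨k, hk⟩) := by
        rw [hgdef]
        simp only
        rw [run_take_succ items k (by omega), hgetk]
      have hpK : p ⟨k, hk⟩ = none := h2 _ (le_refl k)
      have hcntK : (Finset.univ.filter fun i' => p i' = some ⟨k, hk⟩).card = 0 := by
        rw [Finset.card_eq_zero, Finset.filter_eq_empty_iff]
        intro i _ hi
        have hlt := (h1 i _ hi).1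
        rw [Fin.lt_def] at hlt
        simp only [Fin.val_mk] at hlt
        have : p i = none := h2 i (by omega)
        rw [this] at hi
        cases hi
      have hnodup : (((List.finRange n).take k).reverse).Nodup :=
        List.nodup_reverse.mpr ((List.nodup_finRange n).sublist (List.take_sublist _ _))
      rcases hmatch : ((g k).1.filter fun q =>
          decide (0 < q.2 ∧ q.1 < (u ⟨k, hk⟩, ν ⟨k, hk⟩).1)).argmax Prod.fst with _ | q
      · -- new root: keep p
        have hg' : g (k + 1) = ((u ⟨k, hk⟩, ν ⟨k, hk⟩) :: (g k).1, (g k).2 + 1) := by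
          rw [hstep, ← step_none hmatch]
        refine ⟨p, h1, fun i hi => h2 i (by omega), h3, ?_, ?_⟩
        · rw [hg', card_split (fun i => p i = none) hk, if_pos hpK, h4]
        · rw [hg', h5, take_finRange_succ hk]
          simp only [List.reverse_append, List.reverse_cons, List.reverse_nil,
            List.nil_append, List.singleton_append, List.map_cons]
          rw [hcntK]
          simp
      · -- attach: q = (u j, ν j - cnt j) for some j with j.val < k
        have hg' : g (k + 1) =
            ((u ⟨k, hk⟩, ν ⟨k, hk⟩) :: decrementAt (g k).1 q.1, (g k).2) := by
          rw [hstep, ← step_some hmatch]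
        obtain ⟨hqmem, hqpos, hqlt⟩ := argmax_some_mem hmatch
        rw [h5, List.mem_map] at hqmem
        obtain ⟨j, hjmem, hjq⟩ := hqmem
        have hjv : j.val < k := by
          rw [List.mem_reverse, mem_take_finRange] at hjmem
          exact hjmem
        have hq1 : q.1 = u j := by rw [← hjq]
        have hq2 : q.2 = ν j - (Finset.univ.filter fun i' => p i' = some j).card := by
          rw [← hjq]
        have hcntj : (Finset.univ.filter fun i' => p i' = some j).card < ν j := by
          rw [hq2] at hqpos
          omega
        have hujK : u j < u ⟨k, hk⟩ := by rw [← hq1]; exact hqlt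
        set p' : Fin n → Option (Fin n) := Function.update p ⟨k, hk⟩ (some j) with hp'def
        have hp'K : p' ⟨k, hk⟩ = some j := by rw [hp'def]; simp
        have hp'ne : ∀ i : Fin n, i ≠ ⟨k, hk⟩ → p' i = p i := by
          intro i hi
          rw [hp'def, Function.update_apply, if_neg hi]
        have hcnt' : ∀ i : Fin n,
            (Finset.univ.filter fun i' => p' i' = some i).card =
            (Finset.univ.filter fun i' => p i' = some i).card +
              (if i = j then 1 else 0) := by
          intro i
          rw [hp'def, cnt_update_card p _ _ hpK]
          congr 1
          split_ifs with h1' h2' h2'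
          · rfl
          · exact absurd (Option.some_inj.mp h1').symm h2'
          · exact absurd (congrArg some h2'.symm) h1'
          · rfl
        have hcnt'K : (Finset.univ.filter fun i' => p' i' = some ⟨k, hk⟩).card = 0 := by
          rw [hcnt' ⟨k, hk⟩, hcntK, if_neg (by intro h; rw [← h] at hjv; simp at hjv)]
        refine ⟨p', ?_, ?_, ?_, ?_, ?_⟩
        · intro i j' hij'
          by_cases hi : i = ⟨k, hk⟩
          · rw [hi, hp'K] at hij'
            obtain rfl := Option.some_inj.mp hij'.symm
            rw [hi]
            exact ⟨by rw [Fin.lt_def]; exact hjv, hujK⟩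
          · exact h1 i j' (by rw [← hp'ne i hi]; exact hij')
        · intro i hi
          have hine : i ≠ ⟨k, hk⟩ := by
            intro h; rw [h] at hi; simp at hi
          rw [hp'ne i hine]
          exact h2 i (by omega)
        · intro j'
          rw [hcnt' j']
          split_ifs with hj'
          · rw [hj']; omega
          · have := h3 j'; omega
        · rw [hg', h4, card_split (fun i => p' i = none) hk,
            if_neg (by rw [hp'K]; simp)]
          have : (Finset.univ.filter fun i => p i = none ∧ i.val < k) =
              (Finset.univ.filter fun i => p' i = none ∧ i.val < k) := by
            ext i
            simp only [Finset.mem_filter, Finset.mem_univ, true_and]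
            constructor
            · rintro ⟨ha, hb⟩
              refine ⟨?_, hb⟩
              rw [hp'ne i (by intro h; rw [h] at hb; simp at hb)]
              exact ha
            · rintro ⟨ha, hb⟩
              refine ⟨?_, hb⟩
              rw [← hp'ne i (by intro h; rw [h] at hb; simp at hb)]
              exact ha
          rw [this]
          omega
        · rw [hg', h5, hq1, take_finRange_succ hk]
          simp only [List.reverse_append, List.reverse_cons, List.reverse_nil,
            List.nil_append, List.singleton_append, List.map_cons]
          rw [hcnt'K]
          congr 1
          rw [decrementAt_map huinj _ _ hnodup j (by
            rw [List.mem_reverse, mem_take_finRange]; exact hjv) (by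
            rw [hq2] at hqpos; omega)]
          apply List.map_congr_left
          intro i hi
          rw [hcnt' i]
          by_cases hij : i = j
          · rw [hij, if_pos rfl, if_pos rfl]
            simp only [Prod.mk.injEq, true_and]
            omega
          · rw [if_neg hij, if_neg hij]
            simp
  obtain ⟨p, h1, h2, h3, h4, h5⟩ := main n le_rfl
  refine ⟨p, h1, h3, ?_⟩
  have htn : items.take n = items := by rw [← hlen]; exact List.take_length
  have hgn : (g n).2 = R items := by rw [hgdef]; simp only [htn]; rfl
  rw [← hgn, h4]
  congr 1
  ext i
  simp [i.isLt]



/-- The greedy heap patience sorting algorithm is optimal: `R` equals the least number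
of roots over all admissible parent maps. -/
theorem greedy_is_optimal
    (n : ℕ) (u : Fin n → ℝ)
    (hu : ∀ i, u i ∈ Set.Ioo (0 : ℝ) 1) (huinj : Function.Injective u)
    (ν : Fin n → ℕ) (hν : ∀ i, 1 ≤ ν i) :
    IsLeast
      { r : ℕ | ∃ p : Fin n → Option (Fin n),
          (∀ i j, p i = some j → j < i ∧ u j < u i) ∧
          (∀ j, (Finset.univ.filter fun i => p i = some j).card ≤ ν j) ∧
          r = (Finset.univ.filter fun i => p i = none).card }
      (R ((List.finRange n).map fun i => (u i, ν i))) := by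
  constructor
  · obtain ⟨p, h1, h3, hr⟩ := greedy_mem u huinj ν
    exact ⟨p, h1, h3, hr⟩
  · rintro r ⟨p, hp1, hp2, rfl⟩
    exact lower_bound u ν p hp1 hp2

end HeapPatience
end
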